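/- arXiv:2102.13070 — 10 statements merged into one kernel-verified Lean document; each statement's English description precedes it below -/
import Mathlib

section
/- Suppose η : ℤ → ℝ^n satisfies, for every k ∈ ℤ, the fixed-point equation η(k) = Σ_{j∈ℤ} φ(k−j)·( f̃(η(j−1), ŷ(j−1), j−1) − Ã·η(j−1) ), where for each k the series converges absolutely, and suppose Σ_{j∈ℤ} ‖f̃(η(j), ŷ(j), j) − Ã·η(j)‖_∞ < ∞. Then η is an exact solution of the inverse-system state dynamics: η(k+1) = f̃(η(k), ŷ(k), k) for all k ∈ ℤ. -/
open Matrix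

noncomputable section

/-- The matrix sequence `φ : ℤ → ℝ^{n×n}` of the stable inversion theory:
`φ(k) = blockdiag(Ãₛ^k, 0)` for `k > 0`, `φ(0) = blockdiag(I, 0)`, and
`φ(k) = blockdiag(0, −Ãᵤ^k)` for `k < 0`, where `Ãᵤ^k := (Ãᵤ⁻¹)^{−k}`. -/
def stabPhi {ns nu : ℕ} (As : Matrix (Fin ns) (Fin ns) ℝ)
    (Au : Matrix (Fin nu) (Fin nu) ℝ) :
    ℤ → Matrix (Fin ns ⊕ Fin nu) (Fin ns ⊕ Fin nu) ℝ := fun k =>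
  if 0 < k then Matrix.fromBlocks (As ^ k.toNat) 0 0 0
  else if k = 0 then Matrix.fromBlocks 1 0 0 0
  else Matrix.fromBlocks 0 0 0 (-(Au⁻¹ ^ (-k).toNat))

lemma stabPhi_succ {ns nu : ℕ} (As : Matrix (Fin ns) (Fin ns) ℝ)
    (Au : Matrix (Fin nu) (Fin nu) ℝ) (hAu : IsUnit Au.det) (m : ℤ) :
    stabPhi As Au (m + 1) =
      Matrix.fromBlocks As 0 0 Au * stabPhi As Au m +
        (if m = -1 then (1 : Matrix (Fin ns ⊕ Fin nu) (Fin ns ⊕ Fin nu) ℝ) else 0) := by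
  have hinv : Au * Au⁻¹ = 1 := Matrix.mul_nonsing_inv Au hAu
  obtain ⟨t, rfl | rfl⟩ := Int.eq_nat_or_neg m
  · -- m = t ≥ 0
    have h1 : ¬ ((t : ℤ) = -1) := by omega
    have h2 : (0 : ℤ) < t + 1 := by omega
    have h3 : ((t : ℤ) + 1).toNat = t + 1 := by omega
    cases t with
    | zero => simp [stabPhi, Matrix.fromBlocks_multiply]
    | succ s =>
      have h4 : (0:ℤ) < (s+1 : ℕ) := by positivity
      have h5 : ((s+1 : ℕ) : ℤ).toNat = s + 1 := by omega
      simp only [stabPhi, if_pos h2, if_pos h4, h3, h5, h1, if_false,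
        Matrix.fromBlocks_multiply, add_zero]
      simp only [Matrix.mul_zero, Matrix.zero_mul, add_zero, zero_add]
      exact congrArg (fun M => Matrix.fromBlocks M 0 0 0) (pow_succ' As (s+1))
  · -- m = -t
    match t with
    | 0 => simp [stabPhi, Matrix.fromBlocks_multiply]
    | 1 =>
      have : (-(1:ℤ) + 1) = 0 := by ring
      simp [stabPhi, this, Matrix.fromBlocks_multiply, hinv]
      ext (i|i) (j|j) <;> simp [Matrix.fromBlocks, Matrix.one_apply]
    | (s+2) =>
      have h1 : ¬ (0:ℤ) < -(s+2 : ℕ) := by omega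
      have h2 : ¬ (-(s+2 : ℕ) : ℤ) = 0 := by omega
      have h3 : ¬ (0:ℤ) < -(s+2 : ℕ) + 1 := by omega
      have h4 : ¬ (-(s+2 : ℕ) : ℤ) + 1 = 0 := by omega
      have h5 : ¬ (-(s+2 : ℕ) : ℤ) = -1 := by omega
      have h6 : (-(-(s+2 : ℕ) : ℤ)).toNat = s + 2 := by omega
      have h7 : (-((-(s+2 : ℕ) : ℤ) + 1)).toNat = s + 1 := by omega
      simp only [stabPhi, if_neg h1, if_neg h2, if_neg h3, if_neg h4, if_neg h5,
        h6, h7, if_false, Matrix.fromBlocks_multiply, add_zero]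
      have : Au * -(Au⁻¹ ^ (s + 2)) = -(Au⁻¹ ^ (s + 1)) := by
        rw [pow_succ' Au⁻¹ (s+1), Matrix.mul_neg, ← Matrix.mul_assoc, hinv, Matrix.one_mul]
      simp only [Matrix.mul_zero, Matrix.zero_mul, add_zero, zero_add]
      exact congrArg (Matrix.fromBlocks 0 0 0) this.symm

/-- A bounded bi-infinite solution of the fixed-point equation of stable inversion is an
exact solution of the inverse-system state dynamics `η(k+1) = f̃(η(k), ŷ(k), k)`. -/
theorem stable_inversion_fixed_point_solves_dynamics
    (ns nu μ : ℕ) (hμ : 1 ≤ μ)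
    (As : Matrix (Fin ns) (Fin ns) ℝ) (Au : Matrix (Fin nu) (Fin nu) ℝ)
    (hAu : IsUnit Au.det)
    (Atil : Matrix (Fin ns ⊕ Fin nu) (Fin ns ⊕ Fin nu) ℝ)
    (hAtil : Atil = Matrix.fromBlocks As 0 0 Au)
    (ftil : (Fin ns ⊕ Fin nu → ℝ) → (Fin (μ+1) → ℝ) → ℤ → (Fin ns ⊕ Fin nu → ℝ))
    (yhat : ℤ → (Fin (μ+1) → ℝ))
    (η : ℤ → (Fin ns ⊕ Fin nu → ℝ))
    -- for every k the series defining the fixed-point equation converges absolutely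
    (habs : ∀ k : ℤ, Summable fun j : ℤ =>
      ‖(stabPhi As Au (k - j)).mulVec
        (ftil (η (j-1)) (yhat (j-1)) (j-1) - Atil.mulVec (η (j-1)))‖)
    -- the fixed-point equation
    (hfix : ∀ k : ℤ, η k = ∑' j : ℤ,
      (stabPhi As Au (k - j)).mulVec
        (ftil (η (j-1)) (yhat (j-1)) (j-1) - Atil.mulVec (η (j-1))))
    -- summability of the nonlinear residuals
    (hsum : Summable fun j : ℤ => ‖ftil (η j) (yhat j) j - Atil.mulVec (η j)‖) :
    ∀ k : ℤ, η (k+1) = ftil (η k) (yhat k) k := by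
  intro k
  set g : ℤ → (Fin ns ⊕ Fin nu → ℝ) :=
    fun j => ftil (η (j-1)) (yhat (j-1)) (j-1) - Atil.mulVec (η (j-1)) with hg
  set L : (Fin ns ⊕ Fin nu → ℝ) →L[ℝ] (Fin ns ⊕ Fin nu → ℝ) :=
    LinearMap.toContinuousLinearMap Atil.mulVecLin with hL
  have hLapp : ∀ v, L v = Atil.mulVec v := fun v => rfl
  have hS : ∀ m : ℤ, Summable fun j : ℤ => (stabPhi As Au (m - j)).mulVec (g j) :=
    fun m => (habs m).of_norm
  have key : ∀ j : ℤ, (stabPhi As Au (k + 1 - j)).mulVec (g j) =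
      L ((stabPhi As Au (k - j)).mulVec (g j)) + (if j = k + 1 then g (k+1) else 0) := by
    intro j
    have h1 : k + 1 - j = (k - j) + 1 := by ring
    rw [h1, stabPhi_succ As Au hAu, ← hAtil, Matrix.add_mulVec, hLapp,
      Matrix.mulVec_mulVec]
    congr 1
    by_cases hj : j = k + 1
    · have : k - j = -1 := by omega
      simp [this, hj]
    · have h2 : k - j ≠ -1 := by omega
      simp [h2, hj]
  have hA : Summable fun j : ℤ => L ((stabPhi As Au (k - j)).mulVec (g j)) :=
    (hS k).mapL L
  have hB : Summable fun j : ℤ => (if j = k + 1 then g (k+1) else 0) := by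
    apply summable_of_ne_finset_zero (s := {k+1})
    intro j hj
    simp only [Finset.mem_singleton] at hj
    simp [hj]
  calc η (k+1) = ∑' j : ℤ, (stabPhi As Au (k + 1 - j)).mulVec (g j) := hfix (k+1)
    _ = ∑' j : ℤ, (L ((stabPhi As Au (k - j)).mulVec (g j))
          + (if j = k + 1 then g (k+1) else 0)) := by
        exact tsum_congr key
    _ = (∑' j : ℤ, L ((stabPhi As Au (k - j)).mulVec (g j)))
          + ∑' j : ℤ, (if j = k + 1 then g (k+1) else 0) := Summable.tsum_add hA hB
    _ = L (η k) + g (k+1) := by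
        rw [← L.map_tsum (hS k), ← hfix k, tsum_ite_eq]
    _ = ftil (η k) (yhat k) k := by
        have : g (k+1) = ftil (η k) (yhat k) k - Atil.mulVec (η k) := by
          simp [hg]
        rw [this, hLapp]
        abel
end
end

section
/- Assume: (i) ‖φ‖_{∞,1} < ∞; (ii) for every k there exists ŷ†(k) ∈ ℝ^{μ+1} with f̃(0, ŷ†(k), k) = 0; (iii) f̃ is locally approximately linear on the closed s-neighborhood with constants K₁, K₂ > 0; (iv) ‖f̃(0, ŷ(k), k)‖_∞ ≤ s for all k and Σ_{k∈ℤ} ‖f̃(0, ŷ(k), k)‖_∞ < ∞; (v) K₁‖φ‖_{∞,1} < 1; and (vi) ‖φ‖_{∞,1}·K₂·Σ_{k∈ℤ}‖f̃(0, ŷ(k), k)‖_∞ / (1 − ‖φ‖_{∞,1}K₁) ≤ s. Then for any sequence η_{(m)} : ℤ → ℝ^n with ‖η_{(m)}‖_{∞,1} ≤ s, the Picard update η_{(m+1)} is well defined (for each k the defining series converges absolutely) and satisfies ‖η_{(m+1)}‖_{∞,1} ≤ s; hence all Picard iterates started from an iterate in the s-ball remain in the locally approximately linear neighborhood. -/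
open Matrix

noncomputable section

/-- The operator norm induced by the vector `∞`-norm: the maximum absolute row sum. -/
def rowSumNorm {m n : Type*} [Fintype m] [Fintype n] (M : Matrix m n ℝ) : ℝ :=
  ⨆ i, ∑ j, |M i j|

lemma rowSumNorm_nonneg {m n : Type*} [Fintype m] [Fintype n] (M : Matrix m n ℝ) :
    0 ≤ rowSumNorm M :=
  Real.iSup_nonneg fun _ => Finset.sum_nonneg fun _ _ => abs_nonneg _

lemma mulVec_norm_le {m : Type*} [Fintype m] (M : Matrix m m ℝ) (v : m → ℝ) :
    ‖M.mulVec v‖ ≤ rowSumNorm M * ‖v‖ := by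
  rw [pi_norm_le_iff_of_nonneg (mul_nonneg (rowSumNorm_nonneg M) (norm_nonneg v))]
  intro i
  have h1 : ‖M.mulVec v i‖ ≤ ∑ j, |M i j| * ‖v‖ := by
    rw [Matrix.mulVec, dotProduct, Real.norm_eq_abs]
    refine (Finset.abs_sum_le_sum_abs _ _).trans (Finset.sum_le_sum fun j _ => ?_)
    rw [abs_mul]
    exact mul_le_mul_of_nonneg_left ((Real.norm_eq_abs (v j)) ▸ norm_le_pi_norm v j)
      (abs_nonneg _)
  refine h1.trans ?_
  rw [← Finset.sum_mul]; unfold rowSumNorm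
  exact mul_le_mul_of_nonneg_right
    (le_ciSup (f := fun i => ∑ j, |M i j|) (Set.Finite.bddAbove (Set.finite_range _)) i)
    (norm_nonneg v)

set_option maxHeartbeats 2000000 in
/-- Picard iterates remain in the `s`-ball of the locally approximately linear
neighborhood: if `‖η_(m)‖_{∞,1} ≤ s` then the Picard update is well defined
(its defining series converges absolutely at every time) and `‖η_(m+1)‖_{∞,1} ≤ s`. -/
theorem picard_iterates_remain_in_ball
    (ns nu μ : ℕ) (hμ : 1 ≤ μ)
    (As : Matrix (Fin ns) (Fin ns) ℝ) (Au : Matrix (Fin nu) (Fin nu) ℝ)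
    (hAu : IsUnit Au.det)
    (Atil : Matrix (Fin ns ⊕ Fin nu) (Fin ns ⊕ Fin nu) ℝ)
    (hAtil : Atil = Matrix.fromBlocks As 0 0 Au)
    (ftil : (Fin ns ⊕ Fin nu → ℝ) → (Fin (μ+1) → ℝ) → ℤ → (Fin ns ⊕ Fin nu → ℝ))
    (yhat : ℤ → (Fin (μ+1) → ℝ))
    (s K₁ K₂ : ℝ) (hs : 0 < s) (hK₁ : 0 < K₁) (hK₂ : 0 < K₂)
    -- (i) ‖φ‖_{∞,1} < ∞
    (hφsum : Summable fun k : ℤ => rowSumNorm (stabPhi As Au k))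
    -- (ii) for every k there is ŷ†(k) with f̃(0, ŷ†(k), k) = 0
    (hdag : ∀ k : ℤ, ∃ ydag : Fin (μ+1) → ℝ, ftil 0 ydag k = 0)
    -- (iii) local approximate linearity on the closed s-neighborhood
    (hLAL : ∀ (k : ℤ) (a b : Fin ns ⊕ Fin nu → ℝ) (ya yb : Fin (μ+1) → ℝ),
      ‖a‖ ≤ s → ‖b‖ ≤ s → ‖ftil 0 ya k‖ ≤ s → ‖ftil 0 yb k‖ ≤ s →
      ‖(ftil a ya k - Atil.mulVec a) - (ftil b yb k - Atil.mulVec b)‖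
        ≤ K₁ * ‖a - b‖ + K₂ * ‖ftil 0 ya k - ftil 0 yb k‖)
    -- (iv) ‖f̃(0, ŷ(k), k)‖_∞ ≤ s for all k and summability of these norms
    (hfbnd : ∀ k : ℤ, ‖ftil 0 (yhat k) k‖ ≤ s)
    (hfsum : Summable fun k : ℤ => ‖ftil 0 (yhat k) k‖)
    -- (v) K₁‖φ‖_{∞,1} < 1
    (hcontr : K₁ * (∑' k : ℤ, rowSumNorm (stabPhi As Au k)) < 1)
    -- (vi) the ball condition
    (hball : (∑' k : ℤ, rowSumNorm (stabPhi As Au k)) * K₂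
        * (∑' k : ℤ, ‖ftil 0 (yhat k) k‖)
        / (1 - (∑' k : ℤ, rowSumNorm (stabPhi As Au k)) * K₁) ≤ s)
    -- the current iterate with ‖η_(m)‖_{∞,1} ≤ s
    (ηm : ℤ → (Fin ns ⊕ Fin nu → ℝ))
    (hηmsum : Summable fun k : ℤ => ‖ηm k‖)
    (hηm : (∑' k : ℤ, ‖ηm k‖) ≤ s)
    -- the Picard update
    (ηm1 : ℤ → (Fin ns ⊕ Fin nu → ℝ))
    (hηm1 : ∀ k : ℤ, ηm1 k = ∑' j : ℤ, (stabPhi As Au (k - j)).mulVec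
        (ftil (ηm (j-1)) (yhat (j-1)) (j-1) - Atil.mulVec (ηm (j-1)))) :
    (∀ k : ℤ, Summable fun j : ℤ => ‖(stabPhi As Au (k - j)).mulVec
        (ftil (ηm (j-1)) (yhat (j-1)) (j-1) - Atil.mulVec (ηm (j-1)))‖) ∧
    (Summable fun k : ℤ => ‖ηm1 k‖) ∧ (∑' k : ℤ, ‖ηm1 k‖) ≤ s := by
  classical
  set a : ℤ → ℝ := fun k => rowSumNorm (stabPhi As Au k) with hadef
  set c : ℤ → ℝ := fun j => ‖ftil (ηm j) (yhat j) j - Atil.mulVec (ηm j)‖ with hcdef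
  set b : ℤ → ℝ := fun j => c (j - 1) with hbdef
  have ha0 : ∀ k, 0 ≤ a k := fun k => rowSumNorm_nonneg _
  have hA0 : 0 ≤ ∑' k, a k := tsum_nonneg ha0
  have hc0 : ∀ j, 0 ≤ c j := fun j => norm_nonneg _
  have hηmk : ∀ k, ‖ηm k‖ ≤ s := fun k =>
    (Summable.le_tsum hηmsum k fun j _ => norm_nonneg _).trans hηm
  have hcle : ∀ j, c j ≤ K₁ * ‖ηm j‖ + K₂ * ‖ftil 0 (yhat j) j‖ := by
    intro j
    obtain ⟨ydag, hy⟩ := hdag j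
    have h := hLAL j (ηm j) 0 (yhat j) ydag (hηmk j) (by simp [hs.le]) (hfbnd j)
      (by rw [hy]; simpa using hs.le)
    simpa [hy, Matrix.mulVec_zero] using h
  have hCs : ∀ j, c j ≤ (K₁ + K₂) * s := by
    intro j
    refine (hcle j).trans ?_
    have h1 := hηmk j; have h2 := hfbnd j
    nlinarith [norm_nonneg (ηm j), norm_nonneg (ftil 0 (yhat j) j)]
  have hmaj : Summable fun j : ℤ => K₁ * ‖ηm j‖ + K₂ * ‖ftil 0 (yhat j) j‖ :=
    (hηmsum.mul_left K₁).add (hfsum.mul_left K₂)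
  have hcs : Summable c := Summable.of_nonneg_of_le hc0 hcle hmaj
  have hbs : Summable b := by
    have h := (Equiv.subRight (1:ℤ)).summable_iff.mpr hcs
    simpa [Function.comp_def, hbdef] using h
  have hbB : ∑' j, b j = ∑' j, c j := by
    have h := (Equiv.subRight (1:ℤ)).tsum_eq c
    simpa [hbdef] using h
  have hb0 : ∀ j, 0 ≤ b j := fun j => hc0 _
  have hbCs : ∀ j, b j ≤ (K₁ + K₂) * s := fun j => hCs _
  have hak : ∀ k : ℤ, Summable fun j : ℤ => a (k - j) := fun k =>
    hφsum.comp_injective (fun x y h => by omega)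
  have key : ∀ k j : ℤ, ‖(stabPhi As Au (k - j)).mulVec
      (ftil (ηm (j-1)) (yhat (j-1)) (j-1) - Atil.mulVec (ηm (j-1)))‖ ≤ a (k - j) * b j :=
    fun k j => mulVec_norm_le _ _
  have conj1 : ∀ k : ℤ, Summable fun j : ℤ => ‖(stabPhi As Au (k - j)).mulVec
      (ftil (ηm (j-1)) (yhat (j-1)) (j-1) - Atil.mulVec (ηm (j-1)))‖ := by
    intro k
    refine Summable.of_nonneg_of_le (fun j => norm_nonneg _)
      (fun j => (key k j).trans (mul_le_mul_of_nonneg_left (hbCs j) (ha0 _)))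
      ((hak k).mul_right ((K₁ + K₂) * s))
  have habk : ∀ k : ℤ, Summable fun j : ℤ => a (k - j) * b j := fun k =>
    Summable.of_nonneg_of_le (fun j => mul_nonneg (ha0 _) (hb0 j))
      (fun j => mul_le_mul_of_nonneg_left (hbCs j) (ha0 _))
      ((hak k).mul_right ((K₁ + K₂) * s))
  have hbound : ∀ k : ℤ, ‖ηm1 k‖ ≤ ∑' j : ℤ, a (k - j) * b j := by
    intro k
    rw [hηm1 k]
    exact (norm_tsum_le_tsum_norm (conj1 k)).trans
      (Summable.tsum_le_tsum (key k) (conj1 k) (habk k))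
  -- product summability and Fubini
  set F : ℤ × ℤ → ℝ := fun p => a (p.1 - p.2) * b p.2 with hFdef
  have hF0 : 0 ≤ F := fun p => mul_nonneg (ha0 _) (hb0 _)
  let e : ℤ × ℤ ≃ ℤ × ℤ :=
    { toFun := fun p => (p.1 + p.2, p.2)
      invFun := fun p => (p.1 - p.2, p.2)
      left_inv := fun p => by simp
      right_inv := fun p => by simp }
  have hprod : Summable fun p : ℤ × ℤ => a p.1 * b p.2 :=
    hφsum.mul_of_nonneg hbs ha0 hb0
  have hFe : (fun p : ℤ × ℤ => a p.1 * b p.2) = F ∘ e := by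
    funext p; simp [hFdef, e]
  have hFsum : Summable F := e.summable_iff.mp (hFe ▸ hprod)
  have hanorm : Summable fun k : ℤ => ‖a k‖ := by
    simpa [Real.norm_eq_abs, fun k => abs_of_nonneg (ha0 k)] using hφsum
  have hbnorm : Summable fun j : ℤ => ‖b j‖ := by
    simpa [Real.norm_eq_abs, fun j => abs_of_nonneg (hb0 j)] using hbs
  have htsumF : ∑' p, F p = (∑' k, a k) * (∑' j, b j) := by
    have h1 : ∑' p, F p = ∑' p : ℤ × ℤ, a p.1 * b p.2 := by
      rw [hFe]; exact (e.tsum_eq F).symm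
    rw [h1, ← tsum_mul_tsum_of_summable_norm hanorm hbnorm]
  have hpair := (summable_prod_of_nonneg hF0).mp hFsum
  have hmar : Summable fun k : ℤ => ∑' j : ℤ, a (k - j) * b j := hpair.2
  have htsum2 : ∑' p, F p = ∑' k : ℤ, ∑' j : ℤ, a (k - j) * b j := Summable.tsum_prod' hFsum fun k => hpair.1 k
  have hsumη1 : Summable fun k : ℤ => ‖ηm1 k‖ :=
    Summable.of_nonneg_of_le (fun k => norm_nonneg _) hbound hmar
  refine ⟨conj1, hsumη1, ?_⟩
  have hstep1 : ∑' k, ‖ηm1 k‖ ≤ (∑' k, a k) * (∑' j, c j) := by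
    calc ∑' k, ‖ηm1 k‖ ≤ ∑' k : ℤ, ∑' j : ℤ, a (k - j) * b j :=
          Summable.tsum_le_tsum hbound hsumη1 hmar
      _ = ∑' p, F p := htsum2.symm
      _ = (∑' k, a k) * (∑' j, b j) := htsumF
      _ = (∑' k, a k) * (∑' j, c j) := by rw [hbB]
  have hcB : ∑' j, c j ≤ K₁ * (∑' k, ‖ηm k‖) + K₂ * (∑' k, ‖ftil 0 (yhat k) k‖) := by
    calc ∑' j, c j ≤ ∑' j : ℤ, (K₁ * ‖ηm j‖ + K₂ * ‖ftil 0 (yhat j) j‖) :=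
          Summable.tsum_le_tsum hcle hcs hmaj
      _ = _ := by
          rw [Summable.tsum_add (hηmsum.mul_left K₁) (hfsum.mul_left K₂), tsum_mul_left, tsum_mul_left]
  have hF00 : 0 ≤ ∑' k : ℤ, ‖ftil 0 (yhat k) k‖ := tsum_nonneg fun _ => norm_nonneg _
  have hden : 0 < 1 - (∑' k, a k) * K₁ := by nlinarith
  have hkey : (∑' k, a k) * K₂ * (∑' k : ℤ, ‖ftil 0 (yhat k) k‖)
      ≤ s * (1 - (∑' k, a k) * K₁) := (div_le_iff₀ hden).mp hball
  have hstep2 : (∑' k, a k) * (∑' j, c j)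
      ≤ (∑' k, a k) * (K₁ * (∑' k, ‖ηm k‖) + K₂ * (∑' k : ℤ, ‖ftil 0 (yhat k) k‖)) :=
    mul_le_mul_of_nonneg_left hcB hA0
  refine hstep1.trans (hstep2.trans ?_)
  nlinarith [mul_nonneg hA0 hK₁.le, hηm, (tsum_nonneg (fun k => norm_nonneg (ηm k)) : 0 ≤ ∑' k : ℤ, ‖ηm k‖)]
end
end

section
/- (Relaxed sufficient conditions for Picard convergence in stable inversion.) Assume: (A1) the initial iterate satisfies ‖η_{(0)}‖_{∞,1} ≤ s; (A2) for every k there exists ŷ†(k) ∈ ℝ^{μ+1} with f̃(0, ŷ†(k), k) = 0; (A3) f̃ is locally approximately linear on the closed s-neighborhood with constants K₁, K₂ > 0; (A4) K₁‖φ‖_{∞,1} < 1 with ‖φ‖_{∞,1} < ∞; (A5) ‖φ‖_{∞,1}·K₂·Σ_{k∈ℤ}‖f̃(0, ŷ(k), k)‖_∞ / (1 − ‖φ‖_{∞,1}K₁) ≤ s, where Σ_{k∈ℤ}‖f̃(0, ŷ(k), k)‖_∞ < ∞ and ‖f̃(0, ŷ(k), k)‖_∞ ≤ s for all k. Then every Picard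 iterate satisfies ‖η_{(m)}‖_{∞,1} ≤ s; for every k ∈ ℤ the sequence (η_{(m)}(k))_{m≥0} is Cauchy and hence converges in ℝ^n; and the pointwise limit η := lim_{m→∞} η_{(m)} is the unique sequence with ‖η‖_{∞,1} ≤ s satisfying the fixed-point equation η(k) = Σ_{j∈ℤ} φ(k−j)·( f̃(η(j−1), ŷ(j−1), j−1) − Ã·η(j−1) ) for all k. -/
set_option maxHeartbeats 1000000


open Matrix

noncomputable section

lemma norm_mulVec_le {m n : Type*} [Fintype m] [Fintype n] (M : Matrix m n ℝ) (v : n → ℝ) :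
    ‖M.mulVec v‖ ≤ rowSumNorm M * ‖v‖ := by
  rw [pi_norm_le_iff_of_nonneg (mul_nonneg (rowSumNorm_nonneg M) (norm_nonneg v))]
  intro i
  have h1 : ‖M.mulVec v i‖ ≤ ∑ j, |M i j| * ‖v‖ := by
    rw [Matrix.mulVec, dotProduct, Real.norm_eq_abs]
    refine le_trans (Finset.abs_sum_le_sum_abs _ _) (Finset.sum_le_sum fun j _ => ?_)
    rw [abs_mul]
    exact mul_le_mul_of_nonneg_left ((Real.norm_eq_abs (v j)) ▸ norm_le_pi_norm v j) (abs_nonneg _)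
  refine h1.trans ?_
  rw [← Finset.sum_mul]
  have h2 : ∑ j, |M i j| ≤ rowSumNorm M :=
    le_ciSup (Set.Finite.bddAbove (Set.finite_range fun i => ∑ j, |M i j|)) i
  exact mul_le_mul_of_nonneg_right h2 (norm_nonneg v)

def convEquiv : ℤ × ℤ ≃ ℤ × ℤ where
  toFun p := (p.1 - p.2, p.2 - 1)
  invFun p := (p.1 + p.2 + 1, p.2 + 1)
  left_inv p := by simp
  right_inv p := by simp

lemma conv_summable_prod (a c : ℤ → ℝ) (ha0 : ∀ k, 0 ≤ a k) (hc0 : ∀ j, 0 ≤ c j)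
    (haS : Summable a) (hcS : Summable c) :
    Summable (fun p : ℤ × ℤ => a (p.1 - p.2) * c (p.2 - 1)) := by
  have h : Summable (fun p : ℤ × ℤ => a p.1 * c p.2) :=
    haS.mul_of_nonneg hcS ha0 hc0
  exact (convEquiv.summable_iff.mpr h)

lemma conv_nonneg (a c : ℤ → ℝ) (ha0 : ∀ k, 0 ≤ a k) (hc0 : ∀ j, 0 ≤ c j) :
    (0 : ℤ × ℤ → ℝ) ≤ fun p : ℤ × ℤ => a (p.1 - p.2) * c (p.2 - 1) :=
  fun p => mul_nonneg (ha0 _) (hc0 _)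

lemma conv1 (a c : ℤ → ℝ) (ha0 : ∀ k, 0 ≤ a k) (hc0 : ∀ j, 0 ≤ c j)
    (haS : Summable a) (hcS : Summable c) (k : ℤ) :
    Summable (fun j => a (k - j) * c (j - 1)) :=
  ((summable_prod_of_nonneg (conv_nonneg a c ha0 hc0)).mp
    (conv_summable_prod a c ha0 hc0 haS hcS)).1 k

lemma conv2 (a c : ℤ → ℝ) (ha0 : ∀ k, 0 ≤ a k) (hc0 : ∀ j, 0 ≤ c j)
    (haS : Summable a) (hcS : Summable c) :
    Summable (fun k => ∑' j : ℤ, a (k - j) * c (j - 1)) :=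
  ((summable_prod_of_nonneg (conv_nonneg a c ha0 hc0)).mp
    (conv_summable_prod a c ha0 hc0 haS hcS)).2

lemma conv3 (a c : ℤ → ℝ) (ha0 : ∀ k, 0 ≤ a k) (hc0 : ∀ j, 0 ≤ c j)
    (haS : Summable a) (hcS : Summable c) :
    ∑' k : ℤ, ∑' j : ℤ, a (k - j) * c (j - 1) = (∑' k, a k) * (∑' j, c j) := by
  have hP := conv_summable_prod a c ha0 hc0 haS hcS
  have hQ : Summable (fun p : ℤ × ℤ => a p.1 * c p.2) := haS.mul_of_nonneg hcS ha0 hc0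
  have e1 := Summable.tsum_prod' (f := fun p : ℤ × ℤ => a (p.1 - p.2) * c (p.2 - 1)) hP
    (conv1 a c ha0 hc0 haS hcS)
  have e2 := convEquiv.tsum_eq (fun p : ℤ × ℤ => a p.1 * c p.2)
  have e3 := Summable.tsum_prod' (f := fun p : ℤ × ℤ => a p.1 * c p.2) hQ
    (fun k => by simpa using hcS.mul_left (a k))
  simp only [convEquiv, Equiv.coe_fn_mk] at e2
  rw [← e1, e2, e3]
  simp_rw [tsum_mul_left, tsum_mul_right]

lemma shift_tsum (c : ℤ → ℝ) : ∑' j : ℤ, c (j - 1) = ∑' j : ℤ, c j :=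
  (Equiv.subRight (1 : ℤ)).tsum_eq c

lemma shift_summable {c : ℤ → ℝ} (hc : Summable c) : Summable fun j : ℤ => c (j - 1) :=
  ((Equiv.subRight (1 : ℤ)).summable_iff).mpr hc

/-- Relaxed sufficient conditions for convergence of the Picard iteration in stable
inversion: all iterates stay in the `s`-ball, the iteration is pointwise Cauchy, and
its pointwise limit is the unique solution of the fixed-point equation in the ball. -/
theorem picard_iteration_converges_uniquely
    (ns nu μ : ℕ) (hμ : 1 ≤ μ)
    (As : Matrix (Fin ns) (Fin ns) ℝ) (Au : Matrix (Fin nu) (Fin nu) ℝ)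
    (hAu : IsUnit Au.det)
    (Atil : Matrix (Fin ns ⊕ Fin nu) (Fin ns ⊕ Fin nu) ℝ)
    (hAtil : Atil = Matrix.fromBlocks As 0 0 Au)
    (ftil : (Fin ns ⊕ Fin nu → ℝ) → (Fin (μ+1) → ℝ) → ℤ → (Fin ns ⊕ Fin nu → ℝ))
    (yhat : ℤ → (Fin (μ+1) → ℝ))
    (s K₁ K₂ : ℝ) (hs : 0 < s) (hK₁ : 0 < K₁) (hK₂ : 0 < K₂)
    -- (A2) for every k there is ŷ†(k) with f̃(0, ŷ†(k), k) = 0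
    (hdag : ∀ k : ℤ, ∃ ydag : Fin (μ+1) → ℝ, ftil 0 ydag k = 0)
    -- (A3) local approximate linearity on the closed s-neighborhood
    (hLAL : ∀ (k : ℤ) (a b : Fin ns ⊕ Fin nu → ℝ) (ya yb : Fin (μ+1) → ℝ),
      ‖a‖ ≤ s → ‖b‖ ≤ s → ‖ftil 0 ya k‖ ≤ s → ‖ftil 0 yb k‖ ≤ s →
      ‖(ftil a ya k - Atil.mulVec a) - (ftil b yb k - Atil.mulVec b)‖
        ≤ K₁ * ‖a - b‖ + K₂ * ‖ftil 0 ya k - ftil 0 yb k‖)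
    -- (A4) K₁‖φ‖_{∞,1} < 1 with ‖φ‖_{∞,1} < ∞
    (hφsum : Summable fun k : ℤ => rowSumNorm (stabPhi As Au k))
    (hcontr : K₁ * (∑' k : ℤ, rowSumNorm (stabPhi As Au k)) < 1)
    -- (A5) the ball condition
    (hfbnd : ∀ k : ℤ, ‖ftil 0 (yhat k) k‖ ≤ s)
    (hfsum : Summable fun k : ℤ => ‖ftil 0 (yhat k) k‖)
    (hball : (∑' k : ℤ, rowSumNorm (stabPhi As Au k)) * K₂
        * (∑' k : ℤ, ‖ftil 0 (yhat k) k‖)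
        / (1 - (∑' k : ℤ, rowSumNorm (stabPhi As Au k)) * K₁) ≤ s)
    -- the Picard sequence with (A1) the initial iterate in the s-ball
    (η : ℕ → ℤ → (Fin ns ⊕ Fin nu → ℝ))
    (hη0sum : Summable fun k : ℤ => ‖η 0 k‖)
    (hη0 : (∑' k : ℤ, ‖η 0 k‖) ≤ s)
    (hPicard : ∀ (m : ℕ) (k : ℤ), η (m+1) k = ∑' j : ℤ,
      (stabPhi As Au (k - j)).mulVec
        (ftil (η m (j-1)) (yhat (j-1)) (j-1) - Atil.mulVec (η m (j-1)))) :
    -- every iterate stays in the s-ball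
    (∀ m : ℕ, (Summable fun k : ℤ => ‖η m k‖) ∧ (∑' k : ℤ, ‖η m k‖) ≤ s) ∧
    -- pointwise Cauchy, hence pointwise convergent
    (∀ k : ℤ, CauchySeq fun m => η m k) ∧
    -- the limit is the unique fixed point in the s-ball
    (∃ ηlim : ℤ → (Fin ns ⊕ Fin nu → ℝ),
      (∀ k : ℤ, Filter.Tendsto (fun m => η m k) Filter.atTop (nhds (ηlim k))) ∧
      (Summable fun k : ℤ => ‖ηlim k‖) ∧ (∑' k : ℤ, ‖ηlim k‖) ≤ s ∧
      (∀ k : ℤ, ηlim k = ∑' j : ℤ, (stabPhi As Au (k - j)).mulVec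
        (ftil (ηlim (j-1)) (yhat (j-1)) (j-1) - Atil.mulVec (ηlim (j-1)))) ∧
      (∀ ζ : ℤ → (Fin ns ⊕ Fin nu → ℝ),
        (Summable fun k : ℤ => ‖ζ k‖) → (∑' k : ℤ, ‖ζ k‖) ≤ s →
        (∀ k : ℤ, ζ k = ∑' j : ℤ, (stabPhi As Au (k - j)).mulVec
          (ftil (ζ (j-1)) (yhat (j-1)) (j-1) - Atil.mulVec (ζ (j-1)))) →
        ζ = ηlim)) := by
  classical
  set a : ℤ → ℝ := fun k => rowSumNorm (stabPhi As Au k) with ha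
  have ha0 : ∀ k, 0 ≤ a k := fun k => rowSumNorm_nonneg _
  have haS : Summable a := hφsum
  set Φ : ℝ := ∑' k : ℤ, rowSumNorm (stabPhi As Au k) with hΦdef
  have hΦa : Φ = ∑' k, a k := rfl
  have hΦ0 : 0 ≤ Φ := tsum_nonneg ha0
  set Y : ℝ := ∑' k : ℤ, ‖ftil 0 (yhat k) k‖ with hYdef
  have hY0 : 0 ≤ Y := tsum_nonneg fun k => norm_nonneg _
  set q : ℝ := Φ * K₁ with hqdef
  have hq0 : 0 ≤ q := mul_nonneg hΦ0 hK₁.le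
  have hq1 : q < 1 := by rw [hqdef, mul_comm]; exact hcontr
  have h1q : 0 < 1 - q := by linarith
  -- bound on F(x,k) = ftil x yhat k - A x
  have hF0 : ∀ (x : Fin ns ⊕ Fin nu → ℝ) (k : ℤ), ‖x‖ ≤ s →
      ‖ftil x (yhat k) k - Atil.mulVec x‖ ≤ K₁ * ‖x‖ + K₂ * ‖ftil 0 (yhat k) k‖ := by
    intro x k hx
    obtain ⟨yd, hyd⟩ := hdag k
    have h := hLAL k x 0 (yhat k) yd hx (by simp [hs.le]) (hfbnd k) (by simp [hyd, hs.le])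
    simpa [hyd, Matrix.mulVec_zero] using h
  have hFlip : ∀ (x y : Fin ns ⊕ Fin nu → ℝ) (k : ℤ), ‖x‖ ≤ s → ‖y‖ ≤ s →
      ‖(ftil x (yhat k) k - Atil.mulVec x) - (ftil y (yhat k) k - Atil.mulVec y)‖
        ≤ K₁ * ‖x - y‖ := by
    intro x y k hx hy
    have h := hLAL k x y (yhat k) (yhat k) hx hy (hfbnd k) (hfbnd k)
    simpa using h
  -- pointwise ball membership
  have hball_all : ∀ x : ℤ → (Fin ns ⊕ Fin nu → ℝ), (Summable fun k => ‖x k‖) →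
      (∑' k, ‖x k‖) ≤ s → ∀ j, ‖x j‖ ≤ s := fun x hx hxs j =>
    (Summable.le_tsum hx j fun _ _ => norm_nonneg _).trans hxs
  -- key estimates for the convolution operator
  have key : ∀ g : ℤ → (Fin ns ⊕ Fin nu → ℝ), (Summable fun j => ‖g j‖) →
      (∀ k : ℤ, Summable fun j : ℤ => (stabPhi As Au (k - j)).mulVec (g (j-1))) ∧
      (∀ k : ℤ, ‖∑' j : ℤ, (stabPhi As Au (k - j)).mulVec (g (j-1))‖
          ≤ ∑' j : ℤ, a (k - j) * ‖g (j-1)‖) ∧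
      (Summable fun k : ℤ => ∑' j : ℤ, a (k - j) * ‖g (j-1)‖) ∧
      (∑' k : ℤ, ∑' j : ℤ, a (k - j) * ‖g (j-1)‖ = Φ * ∑' j, ‖g j‖) := by
    intro g hg
    have hc0 : ∀ j : ℤ, 0 ≤ ‖g j‖ := fun j => norm_nonneg _
    have hsum1 : ∀ k : ℤ, Summable fun j : ℤ => a (k - j) * ‖g (j-1)‖ :=
      conv1 a (fun j => ‖g j‖) ha0 hc0 haS hg
    have hptw : ∀ (k j : ℤ), ‖(stabPhi As Au (k - j)).mulVec (g (j-1))‖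
        ≤ a (k - j) * ‖g (j-1)‖ := fun k j => norm_mulVec_le _ _
    have hns : ∀ k : ℤ, Summable fun j : ℤ => ‖(stabPhi As Au (k - j)).mulVec (g (j-1))‖ :=
      fun k => Summable.of_nonneg_of_le (fun j => norm_nonneg _) (hptw k) (hsum1 k)
    refine ⟨fun k => Summable.of_norm_bounded (hsum1 k) (hptw k), fun k => ?_,
      conv2 a (fun j => ‖g j‖) ha0 hc0 haS hg, conv3 a (fun j => ‖g j‖) ha0 hc0 haS hg⟩
    exact (norm_tsum_le_tsum_norm (hns k)).trans (Summable.tsum_le_tsum (hptw k) (hns k) (hsum1 k))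
  -- summability and bound for the nonlinearity along a ball sequence
  have hGx : ∀ x : ℤ → (Fin ns ⊕ Fin nu → ℝ), (Summable fun k => ‖x k‖) →
      (∑' k, ‖x k‖) ≤ s →
      (Summable fun j : ℤ => ‖ftil (x j) (yhat j) j - Atil.mulVec (x j)‖) ∧
      (∑' j : ℤ, ‖ftil (x j) (yhat j) j - Atil.mulVec (x j)‖)
        ≤ K₁ * (∑' k, ‖x k‖) + K₂ * Y := by
    intro x hx hxs
    have hb := hball_all x hx hxs
    have hpt : ∀ j : ℤ, ‖ftil (x j) (yhat j) j - Atil.mulVec (x j)‖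
        ≤ K₁ * ‖x j‖ + K₂ * ‖ftil 0 (yhat j) j‖ := fun j => hF0 (x j) j (hb j)
    have hrs : Summable fun j : ℤ => K₁ * ‖x j‖ + K₂ * ‖ftil 0 (yhat j) j‖ :=
      (hx.mul_left K₁).add (hfsum.mul_left K₂)
    have hsumG : Summable fun j : ℤ => ‖ftil (x j) (yhat j) j - Atil.mulVec (x j)‖ :=
      Summable.of_nonneg_of_le (fun j => norm_nonneg _) hpt hrs
    refine ⟨hsumG, (Summable.tsum_le_tsum hpt hsumG hrs).trans_eq ?_⟩
    rw [Summable.tsum_add (hx.mul_left K₁) (hfsum.mul_left K₂), tsum_mul_left, tsum_mul_left]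
  -- master contraction estimate
  have hMaster : ∀ x y : ℤ → (Fin ns ⊕ Fin nu → ℝ),
      (Summable fun k => ‖x k‖) → (∑' k, ‖x k‖) ≤ s →
      (Summable fun k => ‖y k‖) → (∑' k, ‖y k‖) ≤ s →
      (∀ k : ℤ,
        ‖(∑' j : ℤ, (stabPhi As Au (k - j)).mulVec
            (ftil (x (j-1)) (yhat (j-1)) (j-1) - Atil.mulVec (x (j-1))))
          - (∑' j : ℤ, (stabPhi As Au (k - j)).mulVec
            (ftil (y (j-1)) (yhat (j-1)) (j-1) - Atil.mulVec (y (j-1))))‖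
          ≤ ∑' j : ℤ, a (k - j) * (K₁ * ‖x (j-1) - y (j-1)‖)) ∧
      (Summable fun k : ℤ => ∑' j : ℤ, a (k - j) * (K₁ * ‖x (j-1) - y (j-1)‖)) ∧
      (∑' k : ℤ, ∑' j : ℤ, a (k - j) * (K₁ * ‖x (j-1) - y (j-1)‖)
        = q * ∑' k, ‖x k - y k‖) ∧
      (∀ k : ℤ, (∑' j : ℤ, a (k - j) * (K₁ * ‖x (j-1) - y (j-1)‖))
        ≤ q * ∑' k, ‖x k - y k‖) := by
    intro x y hx hxs hy hys
    have hbx := hball_all x hx hxs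
    have hby := hball_all y hy hys
    have hxy : Summable fun k : ℤ => ‖x k - y k‖ :=
      Summable.of_nonneg_of_le (fun k => norm_nonneg _)
        (fun k => norm_sub_le _ _) (hx.add hy)
    set gx : ℤ → (Fin ns ⊕ Fin nu → ℝ) :=
      fun j => ftil (x j) (yhat j) j - Atil.mulVec (x j) with hgx
    set gy : ℤ → (Fin ns ⊕ Fin nu → ℝ) :=
      fun j => ftil (y j) (yhat j) j - Atil.mulVec (y j) with hgy
    have hgxS : Summable fun j => ‖gx j‖ := (hGx x hx hxs).1
    have hgyS : Summable fun j => ‖gy j‖ := (hGx y hy hys).1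
    set δ : ℤ → (Fin ns ⊕ Fin nu → ℝ) := fun j => gx j - gy j with hδ
    have hδle : ∀ j : ℤ, ‖δ j‖ ≤ K₁ * ‖x j - y j‖ := fun j =>
      hFlip (x j) (y j) j (hbx j) (hby j)
    set c' : ℤ → ℝ := fun j => K₁ * ‖x j - y j‖ with hc'
    have hc'0 : ∀ j, 0 ≤ c' j := fun j => mul_nonneg hK₁.le (norm_nonneg _)
    have hc'S : Summable c' := hxy.mul_left K₁
    have hδS : Summable fun j => ‖δ j‖ :=
      Summable.of_nonneg_of_le (fun j => norm_nonneg _) hδle hc'S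
    -- the difference of the two series is the series of differences
    have hsub : ∀ k : ℤ,
        (∑' j : ℤ, (stabPhi As Au (k - j)).mulVec (gx (j-1)))
          - (∑' j : ℤ, (stabPhi As Au (k - j)).mulVec (gy (j-1)))
        = ∑' j : ℤ, (stabPhi As Au (k - j)).mulVec (δ (j-1)) := by
      intro k
      rw [← Summable.tsum_sub ((key gx hgxS).1 k) ((key gy hgyS).1 k)]
      exact tsum_congr fun j => (Matrix.mulVec_sub _ _ _).symm
    have hi : ∀ k : ℤ,
        ‖(∑' j : ℤ, (stabPhi As Au (k - j)).mulVec (gx (j-1)))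
          - (∑' j : ℤ, (stabPhi As Au (k - j)).mulVec (gy (j-1)))‖
        ≤ ∑' j : ℤ, a (k - j) * c' (j-1) := by
      intro k
      rw [hsub k]
      refine ((key δ hδS).2.1 k).trans (Summable.tsum_le_tsum (fun j => ?_)
        (conv1 a (fun j => ‖δ j‖) ha0 (fun j => norm_nonneg _) haS hδS k)
        (conv1 a c' ha0 hc'0 haS hc'S k))
      exact mul_le_mul_of_nonneg_left (hδle (j-1)) (ha0 _)
    have hii : Summable fun k : ℤ => ∑' j : ℤ, a (k - j) * c' (j-1) :=
      conv2 a c' ha0 hc'0 haS hc'S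
    have hiii : ∑' k : ℤ, ∑' j : ℤ, a (k - j) * c' (j-1) = q * ∑' k, ‖x k - y k‖ := by
      rw [conv3 a c' ha0 hc'0 haS hc'S]
      have : ∑' j, c' j = K₁ * ∑' k, ‖x k - y k‖ := tsum_mul_left
      rw [this, hqdef, ← mul_assoc]
    have hiv : ∀ k : ℤ, (∑' j : ℤ, a (k - j) * c' (j-1)) ≤ q * ∑' k, ‖x k - y k‖ := by
      intro k
      have hsh : Summable fun j : ℤ => c' (j - 1) := shift_summable hc'S
      have h1 : (∑' j : ℤ, a (k - j) * c' (j-1)) ≤ ∑' j : ℤ, Φ * c' (j-1) := by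
        refine Summable.tsum_le_tsum (fun j => ?_) (conv1 a c' ha0 hc'0 haS hc'S k)
          (hsh.mul_left Φ)
        exact mul_le_mul_of_nonneg_right
          (Summable.le_tsum haS (k - j) fun _ _ => ha0 _) (hc'0 _)
      refine h1.trans_eq ?_
      rw [tsum_mul_left, shift_tsum c']
      have : ∑' j, c' j = K₁ * ∑' k, ‖x k - y k‖ := tsum_mul_left
      rw [this, hqdef, ← mul_assoc]
    exact ⟨hi, hii, hiii, hiv⟩
  -- ball invariance of the iterates
  have hball' : q * s + Φ * (K₂ * Y) ≤ s := by
    rw [div_le_iff₀ h1q] at hball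
    nlinarith [hball, hΦ0, hY0, hq0]
  have hS : ∀ m : ℕ, (Summable fun k : ℤ => ‖η m k‖) ∧ (∑' k : ℤ, ‖η m k‖) ≤ s := by
    intro m
    induction m with
    | zero => exact ⟨hη0sum, hη0⟩
    | succ m ih =>
      obtain ⟨ihS, ihle⟩ := ih
      set g : ℤ → (Fin ns ⊕ Fin nu → ℝ) :=
        fun j => ftil (η m j) (yhat j) j - Atil.mulVec (η m j) with hg
      have hgS : Summable fun j => ‖g j‖ := (hGx (η m) ihS ihle).1
      have hkey := key g hgS
      have heq : ∀ k : ℤ, η (m+1) k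
          = ∑' j : ℤ, (stabPhi As Au (k - j)).mulVec (g (j-1)) := fun k => hPicard m k
      have hnrm : ∀ k : ℤ, ‖η (m+1) k‖ ≤ ∑' j : ℤ, a (k - j) * ‖g (j-1)‖ := by
        intro k; rw [heq k]; exact hkey.2.1 k
      have hsumS : Summable fun k : ℤ => ‖η (m+1) k‖ :=
        Summable.of_nonneg_of_le (fun k => norm_nonneg _) hnrm hkey.2.2.1
      refine ⟨hsumS, ?_⟩
      have h1 : (∑' k : ℤ, ‖η (m+1) k‖) ≤ ∑' k : ℤ, ∑' j : ℤ, a (k - j) * ‖g (j-1)‖ :=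
        Summable.tsum_le_tsum hnrm hsumS hkey.2.2.1
      rw [hkey.2.2.2] at h1
      have h2 : Φ * (∑' j, ‖g j‖) ≤ Φ * (K₁ * (∑' k, ‖η m k‖) + K₂ * Y) :=
        mul_le_mul_of_nonneg_left (hGx (η m) ihS ihle).2 hΦ0
      have h3 : Φ * (K₁ * (∑' k, ‖η m k‖) + K₂ * Y) ≤ q * s + Φ * (K₂ * Y) := by
        rw [hqdef]
        nlinarith [ihle, hΦ0, hK₁.le]
      exact h1.trans (h2.trans (h3.trans hball'))
  -- differences
  set Δ : ℕ → ℤ → ℝ := fun m k => ‖η (m+1) k - η m k‖ with hΔdef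
  have hΔS : ∀ m : ℕ, Summable (Δ m) := fun m =>
    Summable.of_nonneg_of_le (fun k => norm_nonneg _)
      (fun k => norm_sub_le _ _) ((hS (m+1)).1.add (hS m).1)
  set D : ℕ → ℝ := fun m => ∑' k, Δ m k with hDdef
  have hD0 : ∀ m, 0 ≤ D m := fun m => tsum_nonneg fun k => norm_nonneg _
  have hstep : ∀ m : ℕ, D (m+1) ≤ q * D m := by
    intro m
    obtain ⟨hi, hii, hiii, _⟩ := hMaster (η (m+1)) (η m)
      (hS (m+1)).1 (hS (m+1)).2 (hS m).1 (hS m).2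
    have hpt : ∀ k : ℤ, Δ (m+1) k ≤ ∑' j : ℤ, a (k - j) * (K₁ * ‖η (m+1) (j-1) - η m (j-1)‖) := by
      intro k
      have := hi k
      rw [← hPicard (m+1) k, ← hPicard m k] at this
      exact this
    calc D (m+1) ≤ ∑' k : ℤ, ∑' j : ℤ, a (k - j) * (K₁ * ‖η (m+1) (j-1) - η m (j-1)‖) :=
          Summable.tsum_le_tsum hpt (hΔS (m+1)) hii
      _ = q * D m := hiii
  have hDgeom : ∀ m : ℕ, D m ≤ D 0 * q ^ m := by
    intro m
    induction m with
    | zero => simp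
    | succ m ih =>
      calc D (m+1) ≤ q * D m := hstep m
        _ ≤ q * (D 0 * q ^ m) := mul_le_mul_of_nonneg_left ih hq0
        _ = D 0 * q ^ (m+1) := by ring
  -- pointwise Cauchy
  have hcauchy : ∀ k : ℤ, CauchySeq fun m => η m k := by
    intro k
    refine cauchySeq_of_le_geometric q (D 0) hq1 fun m => ?_
    rw [dist_eq_norm, norm_sub_rev]
    exact (Summable.le_tsum (hΔS m) k fun _ _ => norm_nonneg _).trans (hDgeom m)
  -- the pointwise limit
  set ηlim : ℤ → (Fin ns ⊕ Fin nu → ℝ) :=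
    fun k => Filter.limUnder Filter.atTop fun m => η m k with hηlimdef
  have htend : ∀ k : ℤ, Filter.Tendsto (fun m => η m k) Filter.atTop (nhds (ηlim k)) :=
    fun k => (hcauchy k).tendsto_limUnder
  -- geometric tail bounds
  set B : ℕ → ℝ := fun m => D 0 * (1 - q)⁻¹ * q ^ m with hBdef
  have hIco : ∀ m M : ℕ, (∑ i ∈ Finset.Ico m M, q ^ i) ≤ q ^ m * (1 - q)⁻¹ := by
    intro m M
    rw [Finset.sum_Ico_eq_sum_range]
    simp_rw [pow_add]
    rw [← Finset.mul_sum]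
    refine mul_le_mul_of_nonneg_left ?_ (pow_nonneg hq0 m)
    refine (Summable.sum_le_tsum (Finset.range (M - m)) (fun i _ => pow_nonneg hq0 i)
      (summable_geometric_of_lt_one hq0 hq1)).trans_eq (tsum_geometric_of_lt_one hq0 hq1)
  have hfin : ∀ m M : ℕ, m ≤ M → ∀ A : Finset ℤ,
      (∑ k ∈ A, ‖η m k - η M k‖) ≤ B m := by
    intro m M hmM A
    have c1 : (∑ k ∈ A, ‖η m k - η M k‖) ≤ ∑ k ∈ A, ∑ i ∈ Finset.Ico m M, Δ i k := by
      refine Finset.sum_le_sum fun k _ => ?_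
      have h := dist_le_Ico_sum_dist (fun i => η i k) hmM
      rw [dist_eq_norm] at h
      refine h.trans (le_of_eq (Finset.sum_congr rfl fun i _ => ?_))
      rw [dist_eq_norm, norm_sub_rev]
    have c2 : (∑ k ∈ A, ∑ i ∈ Finset.Ico m M, Δ i k)
        = ∑ i ∈ Finset.Ico m M, ∑ k ∈ A, Δ i k := Finset.sum_comm
    have c3 : (∑ i ∈ Finset.Ico m M, ∑ k ∈ A, Δ i k) ≤ ∑ i ∈ Finset.Ico m M, D i :=
      Finset.sum_le_sum fun i _ => Summable.sum_le_tsum A (fun k _ => norm_nonneg _) (hΔS i)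
    have c4 : (∑ i ∈ Finset.Ico m M, D i) ≤ ∑ i ∈ Finset.Ico m M, D 0 * q ^ i :=
      Finset.sum_le_sum fun i _ => hDgeom i
    have c5 : (∑ i ∈ Finset.Ico m M, D 0 * q ^ i) ≤ B m := by
      rw [← Finset.mul_sum]
      refine (mul_le_mul_of_nonneg_left (hIco m M) (hD0 0)).trans_eq ?_
      rw [hBdef]; ring
    linarith [c1, c2.le, c3, c4, c5]
  have hlimA : ∀ (m : ℕ) (A : Finset ℤ), (∑ k ∈ A, ‖η m k - ηlim k‖) ≤ B m := by
    intro m A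
    have ht : Filter.Tendsto (fun M => ∑ k ∈ A, ‖η m k - η M k‖) Filter.atTop
        (nhds (∑ k ∈ A, ‖η m k - ηlim k‖)) :=
      tendsto_finset_sum A fun k _ => (Filter.Tendsto.const_sub (η m k) (htend k)).norm
    exact le_of_tendsto ht (Filter.eventually_atTop.mpr ⟨m, fun M hM => hfin m M hM A⟩)
  have htail : ∀ m : ℕ, (Summable fun k : ℤ => ‖η m k - ηlim k‖) ∧
      (∑' k : ℤ, ‖η m k - ηlim k‖) ≤ B m := by
    intro m
    have hsm : Summable fun k : ℤ => ‖η m k - ηlim k‖ :=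
      summable_of_sum_le (fun k => norm_nonneg _) (hlimA m)
    exact ⟨hsm, Summable.tsum_le_of_sum_le hsm (hlimA m)⟩
  -- the limit lies in the ball
  have hlimfin : ∀ A : Finset ℤ, (∑ k ∈ A, ‖ηlim k‖) ≤ s := by
    intro A
    have ht : Filter.Tendsto (fun M => ∑ k ∈ A, ‖η M k‖) Filter.atTop
        (nhds (∑ k ∈ A, ‖ηlim k‖)) :=
      tendsto_finset_sum A fun k _ => (htend k).norm
    exact le_of_tendsto' ht fun M =>
      (Summable.sum_le_tsum A (fun k _ => norm_nonneg _) (hS M).1).trans (hS M).2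
  have hlimS : Summable fun k : ℤ => ‖ηlim k‖ :=
    summable_of_sum_le (fun k => norm_nonneg _) hlimfin
  have hlimle : (∑' k : ℤ, ‖ηlim k‖) ≤ s := Summable.tsum_le_of_sum_le hlimS hlimfin
  have hBto0 : Filter.Tendsto B Filter.atTop (nhds 0) := by
    have h := (tendsto_pow_atTop_nhds_zero_of_lt_one hq0 hq1).const_mul (D 0 * (1 - q)⁻¹)
    simpa [hBdef] using h
  -- the fixed-point equation for the limit
  have hfixed : ∀ k : ℤ, ηlim k = ∑' j : ℤ, (stabPhi As Au (k - j)).mulVec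
      (ftil (ηlim (j-1)) (yhat (j-1)) (j-1) - Atil.mulVec (ηlim (j-1))) := by
    intro k
    set R : Fin ns ⊕ Fin nu → ℝ := ∑' j : ℤ, (stabPhi As Au (k - j)).mulVec
      (ftil (ηlim (j-1)) (yhat (j-1)) (j-1) - Atil.mulVec (ηlim (j-1))) with hR
    have hbnd : ∀ m : ℕ, ‖ηlim k - R‖ ≤ B (m+1) + q * B m := by
      intro m
      have h1 : ‖ηlim k - η (m+1) k‖ ≤ B (m+1) := by
        rw [norm_sub_rev]
        exact (Summable.le_tsum (htail (m+1)).1 k fun _ _ => norm_nonneg _).trans (htail (m+1)).2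
      have h2 : ‖η (m+1) k - R‖ ≤ q * B m := by
        obtain ⟨hi, _, _, hiv⟩ := hMaster (η m) ηlim (hS m).1 (hS m).2 hlimS hlimle
        have h3 := (hi k).trans ((hiv k).trans
          (mul_le_mul_of_nonneg_left (htail m).2 hq0))
        rw [← hPicard m k] at h3
        exact h3
      have ht := dist_triangle (ηlim k) (η (m+1) k) R
      rw [dist_eq_norm, dist_eq_norm, dist_eq_norm] at ht
      linarith [ht, h1, h2]
    have hto : Filter.Tendsto (fun m => B (m+1) + q * B m) Filter.atTop (nhds 0) := by
      have h1 : Filter.Tendsto (fun m => B (m+1)) Filter.atTop (nhds 0) :=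
        hBto0.comp (Filter.tendsto_add_atTop_nat 1)
      have h2 := hBto0.const_mul q
      simpa using h1.add h2
    have hzero : ‖ηlim k - R‖ ≤ 0 := ge_of_tendsto' hto hbnd
    have := norm_le_zero_iff.mp hzero
    exact sub_eq_zero.mp this
  -- uniqueness
  have huniq : ∀ ζ : ℤ → (Fin ns ⊕ Fin nu → ℝ),
      (Summable fun k : ℤ => ‖ζ k‖) → (∑' k : ℤ, ‖ζ k‖) ≤ s →
      (∀ k : ℤ, ζ k = ∑' j : ℤ, (stabPhi As Au (k - j)).mulVec
        (ftil (ζ (j-1)) (yhat (j-1)) (j-1) - Atil.mulVec (ζ (j-1)))) →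
      ζ = ηlim := by
    intro ζ hζS hζle hζfix
    have hd : Summable fun k : ℤ => ‖ζ k - ηlim k‖ :=
      Summable.of_nonneg_of_le (fun k => norm_nonneg _)
        (fun k => norm_sub_le _ _) (hζS.add hlimS)
    obtain ⟨hi, hii, hiii, _⟩ := hMaster ζ ηlim hζS hζle hlimS hlimle
    have hpt : ∀ k : ℤ, ‖ζ k - ηlim k‖
        ≤ ∑' j : ℤ, a (k - j) * (K₁ * ‖ζ (j-1) - ηlim (j-1)‖) := by
      intro k
      have h := hi k
      rw [← hζfix k, ← hfixed k] at h
      exact h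
    have hle : (∑' k : ℤ, ‖ζ k - ηlim k‖) ≤ q * ∑' k : ℤ, ‖ζ k - ηlim k‖ :=
      (Summable.tsum_le_tsum hpt hd hii).trans_eq hiii
    have hnn : 0 ≤ ∑' k : ℤ, ‖ζ k - ηlim k‖ := tsum_nonneg fun k => norm_nonneg _
    have hzero : (∑' k : ℤ, ‖ζ k - ηlim k‖) = 0 := by nlinarith
    funext k
    have h1 : ‖ζ k - ηlim k‖ ≤ 0 := by
      rw [← hzero]
      exact Summable.le_tsum hd k fun _ _ => norm_nonneg _
    exact sub_eq_zero.mp (norm_le_zero_iff.mp h1)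
  exact ⟨hS, hcauchy, ηlim, htend, hlimS, hlimle, hfixed, huniq⟩
end
end

section
/- (General inverse of a PWA system of relative degree ν ≥ 1.) Suppose all component feedthrough terms vanish, D_{q,k} = 0 for all q, k. Fix ν ≥ 1 and a time k, and along a trajectory define 𝒞_k := 𝐂_{k+ν}·(∏_{m=0}^{ν−1} 𝐀_{k+m}), 𝒟_k := 𝐂_{k+ν}·(∏_{m=1}^{ν−1} 𝐀_{k+m})·𝐁_k, 𝒢_k := 𝐂_{k+ν}·Σ_{s=0}^{ν−1} (∏_{m=s+1}^{ν−1} 𝐀_{k+m})·𝐅_{k+s} + 𝐆_{k+ν}, and Ψ_k := 𝐂_{k+ν}·Σ_{s=1}^{ν−1} (∏_{m=s+1}^{ν−1} 𝐀_{k+m})·𝐁_{k+s}·u_{k+s}. If 𝒟_k ≠ 0, then the trajectory satisfies the (anticausal) inverse-system equations u_k = 𝒟_k^{-1}·( y_{k+ν} − 𝒞_k x_k − 𝒢_k − Ψ_k ) and x_{k+1} = (𝐀_k − 𝐁_k𝒟_k^{-1}𝒞_k)·x_k + 𝐁_k𝒟_k^{-1}·y_{k+ν} + 𝐅_k − 𝐁_k𝒟_k^{-1}·(𝒢_k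 + Ψ_k). -/
open Matrix

noncomputable section

/-- Heaviside step function with the convention `H 0 = 1`. -/
def heaviside (t : ℝ) : ℝ := if 0 ≤ t then 1 else 0

/-- `aProd A k a b = A (k+b-1) * ⋯ * A (k+a)`, the ordered product `∏_{m=a}^{b-1} A_{k+m}`
with the factor of largest index leftmost; an empty product (`b ≤ a`) is the identity. -/
def aProd {n : ℕ} (A : ℤ → Matrix (Fin n) (Fin n) ℝ) (k : ℤ) (a : ℕ) :
    ℕ → Matrix (Fin n) (Fin n) ℝ
  | 0 => 1
  | (b+1) => if b + 1 ≤ a then 1 else A (k + b) * aProd A k a b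

lemma mulVec_finsum {n : ℕ} (M : Matrix (Fin n) (Fin n) ℝ) (s : Finset ℕ) (v : ℕ → Fin n → ℝ) :
    M.mulVec (∑ i ∈ s, v i) = ∑ i ∈ s, M.mulVec (v i) := by
  ext i
  simp [mulVec, dotProduct, Finset.mul_sum]
  rw [Finset.sum_comm]

lemma dot_finsum {n : ℕ} (c : Fin n → ℝ) (s : Finset ℕ) (v : ℕ → Fin n → ℝ) :
    c ⬝ᵥ (∑ i ∈ s, v i) = ∑ i ∈ s, c ⬝ᵥ v i := by
  simp [dotProduct, Finset.mul_sum]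
  rw [Finset.sum_comm]

lemma vecMulVec_mulVec' {n : ℕ} (w v xv : Fin n → ℝ) :
    (vecMulVec w v).mulVec xv = (v ⬝ᵥ xv) • w := by
  ext i
  simp [vecMulVec, mulVec, dotProduct, Finset.mul_sum, mul_comm, mul_assoc, mul_left_comm]

lemma traj_formula {n : ℕ} (boldA : ℤ → Matrix (Fin n) (Fin n) ℝ)
    (boldB boldF : ℤ → (Fin n → ℝ)) (u : ℤ → ℝ) (x : ℤ → (Fin n → ℝ))
    (hx : ∀ m : ℤ, x (m+1) = (boldA m).mulVec (x m) + u m • boldB m + boldF m)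
    (k : ℤ) : ∀ j : ℕ, x (k + j) = (aProd boldA k 0 j).mulVec (x k)
      + ∑ s ∈ Finset.range j,
          (aProd boldA k (s+1) j).mulVec (u (k+s) • boldB (k+s) + boldF (k+s)) := by
  intro j
  induction j with
  | zero => simp [aProd]
  | succ j ih =>
    have h1 : x (k + ((j+1:ℕ):ℤ)) = (boldA (k+j)).mulVec (x (k+j))
        + u (k+j) • boldB (k+j) + boldF (k+j) := by
      have hk : (k + ((j:ℤ)+1)) = (k + j) + 1 := by ring
      push_cast
      rw [hk, hx]
    rw [h1, ih]
    rw [Finset.sum_range_succ]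
    have htop : aProd boldA k (j+1) (j+1) = 1 := by simp [aProd]
    have h0 : aProd boldA k 0 (j+1) = boldA (k+j) * aProd boldA k 0 j := by
      simp [aProd]
    have hsum : ∑ s ∈ Finset.range j,
        (aProd boldA k (s+1) (j+1)).mulVec (u (k+s) • boldB (k+s) + boldF (k+s))
        = ∑ s ∈ Finset.range j,
        (boldA (k+j)).mulVec ((aProd boldA k (s+1) j).mulVec (u (k+s) • boldB (k+s) + boldF (k+s))) := by
      refine Finset.sum_congr rfl fun s hs => ?_
      have hslt : s + 1 ≤ j := Finset.mem_range.mp hs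
      have : aProd boldA k (s+1) (j+1) = boldA (k+j) * aProd boldA k (s+1) j := by
        have : ¬ (j + 1 ≤ s + 1) := by omega
        simp [aProd, this]
      rw [this, Matrix.mulVec_mulVec]
    rw [htop, h0, hsum, Matrix.one_mulVec, ← Matrix.mulVec_mulVec,
      Matrix.mulVec_add, mulVec_finsum]
    abel

/-- General inverse of a PWA system of relative degree `ν ≥ 1`: if `𝒟_k ≠ 0`, any
trajectory satisfies the (anticausal, implicit) inverse-system equations. -/
theorem pwa_general_inverse
    (n p L : ℕ)
    (A : Fin L → ℤ → Matrix (Fin n) (Fin n) ℝ)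
    (B F : Fin L → ℤ → (Fin n → ℝ))
    (C : Fin L → ℤ → (Fin n → ℝ))
    (D G : Fin L → ℤ → ℝ)
    (P : Matrix (Fin p) (Fin n) ℝ) (β : Fin p → ℝ)
    (Δstar : Fin L → Set (Fin p → ℝ))
    (hdisj : Pairwise fun q q' : Fin L => Disjoint (Δstar q) (Δstar q'))
    (δ : (Fin n → ℝ) → (Fin p → ℝ))
    (hδ : ∀ xv, δ xv = fun i => heaviside ((P.mulVec xv) i - β i))
    (loc : (Fin n → ℝ) → Fin L)
    (hloc : ∀ xv, δ xv ∈ Δstar (loc xv))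
    -- all component feedthrough terms vanish
    (hD0 : ∀ (q : Fin L) (k : ℤ), D q k = 0)
    -- a trajectory of the PWA system
    (x : ℤ → (Fin n → ℝ)) (u y : ℤ → ℝ)
    (hx : ∀ k : ℤ, x (k+1) = (A (loc (x k)) k).mulVec (x k)
        + u k • B (loc (x k)) k + F (loc (x k)) k)
    (hy : ∀ k : ℤ, y k = C (loc (x k)) k ⬝ᵥ x k + D (loc (x k)) k * u k + G (loc (x k)) k)
    -- active-location (bold) quantities along the trajectory
    (boldA : ℤ → Matrix (Fin n) (Fin n) ℝ) (hboldA : ∀ k, boldA k = A (loc (x k)) k)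
    (boldB : ℤ → (Fin n → ℝ)) (hboldB : ∀ k, boldB k = B (loc (x k)) k)
    (boldF : ℤ → (Fin n → ℝ)) (hboldF : ∀ k, boldF k = F (loc (x k)) k)
    (boldC : ℤ → (Fin n → ℝ)) (hboldC : ∀ k, boldC k = C (loc (x k)) k)
    (boldG : ℤ → ℝ) (hboldG : ∀ k, boldG k = G (loc (x k)) k)
    -- fix the relative degree ν ≥ 1 and the time k
    (ν : ℕ) (hν : 1 ≤ ν) (k : ℤ)
    -- the calligraphic quantities
    (𝒞 : Fin n → ℝ) (h𝒞 : 𝒞 = boldC (k + ν) ᵥ* aProd boldA k 0 ν)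
    (𝒟 : ℝ) (h𝒟 : 𝒟 = boldC (k + ν) ⬝ᵥ (aProd boldA k 1 ν).mulVec (boldB k))
    (𝒢 : ℝ) (h𝒢 : 𝒢 = boldC (k + ν) ⬝ᵥ (∑ s ∈ Finset.range ν,
        (aProd boldA k (s+1) ν).mulVec (boldF (k + s))) + boldG (k + ν))
    (Ψ : ℝ) (hΨ : Ψ = ∑ s ∈ Finset.Ico 1 ν,
        (boldC (k + ν) ⬝ᵥ (aProd boldA k (s+1) ν).mulVec (boldB (k + s))) * u (k + s))
    (h𝒟ne : 𝒟 ≠ 0) :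
    -- the inverse output equation
    u k = 𝒟⁻¹ * (y (k + ν) - 𝒞 ⬝ᵥ x k - 𝒢 - Ψ) ∧
    -- the inverse state transition equation
    x (k+1) = (boldA k - 𝒟⁻¹ • vecMulVec (boldB k) 𝒞).mulVec (x k)
        + (𝒟⁻¹ * y (k + ν)) • boldB k
        + (boldF k - (𝒟⁻¹ * (𝒢 + Ψ)) • boldB k) := by
  have hx' : ∀ m : ℤ, x (m+1) = (boldA m).mulVec (x m) + u m • boldB m + boldF m := by
    intro m; rw [hboldA, hboldB, hboldF]; exact hx m
  -- the variation-of-constants formula at k+ν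
  have hxν := traj_formula boldA boldB boldF u x hx' k ν
  -- y at k+ν
  have hyν : y (k + ν) = boldC (k+ν) ⬝ᵥ x (k+ν) + boldG (k+ν) := by
    rw [hy, hboldC, hboldG, hD0]; ring
  -- the key output identity
  have hkey : y (k + ν) = 𝒞 ⬝ᵥ x k + 𝒟 * u k + Ψ + 𝒢 := by
    rw [hyν, hxν, dotProduct_add, dotProduct_mulVec, dot_finsum]
    have hterm : ∀ s ∈ Finset.range ν,
        boldC (k+ν) ⬝ᵥ (aProd boldA k (s+1) ν).mulVec (u (k+s) • boldB (k+s) + boldF (k+s))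
        = (boldC (k+ν) ⬝ᵥ (aProd boldA k (s+1) ν).mulVec (boldB (k+s))) * u (k+s)
          + boldC (k+ν) ⬝ᵥ (aProd boldA k (s+1) ν).mulVec (boldF (k+s)) := by
      intro s _
      rw [Matrix.mulVec_add, dotProduct_add, Matrix.mulVec_smul, dotProduct_smul]
      simp [mul_comm]
    rw [Finset.sum_congr rfl hterm, Finset.sum_add_distrib]
    have hsplit : ∑ s ∈ Finset.range ν,
        (boldC (k+ν) ⬝ᵥ (aProd boldA k (s+1) ν).mulVec (boldB (k+s))) * u (k+s)
        = (boldC (k+ν) ⬝ᵥ (aProd boldA k 1 ν).mulVec (boldB k)) * u k + Ψ := by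
      rw [Finset.range_eq_Ico, Finset.sum_eq_sum_Ico_succ_bot hν]
      simp [hΨ]
    rw [hsplit, ← dot_finsum]
    rw [h𝒞, h𝒟, h𝒢]
    rw [dotProduct_mulVec]
    ring
  have hu : u k = 𝒟⁻¹ * (y (k + ν) - 𝒞 ⬝ᵥ x k - 𝒢 - Ψ) := by
    field_simp
    rw [hkey]; ring
  refine ⟨hu, ?_⟩
  rw [hx' k, Matrix.sub_mulVec, Matrix.smul_mulVec, vecMulVec_mulVec']
  have : u k • boldB k = ((𝒟⁻¹ * y (k + ν)) - 𝒟⁻¹ * (𝒞 ⬝ᵥ x k) - 𝒟⁻¹ * (𝒢 + Ψ)) • boldB k := by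
    rw [hu]; congr 1; ring
  rw [this]
  ext i
  simp [smul_smul]
  ring
end
end

section
/- (Non-uniqueness of PWA system inversion for relative degree ≥ 1.) Consider the time-invariant PWA system on ℝ² with two locations: A_1 = [[0,1],[0,0]], A_2 = [[0,2],[0,0]], B_1 = B_2 = (0,1)ᵀ, C_1 = C_2 = [1,0], and all F, D, G terms zero; switching is given by P = [0,1], β = 1.5, Δ*_1 = {1}, Δ*_2 = {0}, so location 1 is active when the second state coordinate is ≥ 1.5 and location 2 otherwise. Then from the state x_k = (0,0)ᵀ, and for any value of the next input u_{k+1}: the input u_k = 2 yields x_{k+1} = (0,2)ᵀ (location 1 active) and output y_{k+2} = 2, while the distinct input u_k = 1 yields x_{k+1} = (0,1)ᵀ (location 2 active) and also output y_{k+2} = 2. Hence the map u_k ↦ y_{k+2} is not injective, and the inverse of a PWA system with relative degree ≥ 1 cannot in general be expressed by an explicit formula. -/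
open Matrix

noncomputable section

/-- Non-uniqueness of PWA system inversion for relative degree ≥ 1: in the two-location
example with `A₁ = [[0,1],[0,0]]`, `A₂ = [[0,2],[0,0]]`, `B = (0,1)ᵀ`, `C = [1,0]`,
switching on the second state coordinate at threshold `3/2`, both inputs `u_k = 2`
(location 1) and `u_k = 1` (location 2) from `x_k = 0` give previewed output
`y_{k+2} = 2`, so the map `u_k ↦ y_{k+2}` is not injective. -/
theorem pwa_inverse_nonuniqueness
    (A1 A2 : Matrix (Fin 2) (Fin 2) ℝ)
    (hA1 : A1 = !![0, 1; 0, 0]) (hA2 : A2 = !![0, 2; 0, 0])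
    (Bv Cv : Fin 2 → ℝ)
    (hB : Bv = ![0, 1]) (hC : Cv = ![1, 0])
    -- one step of the PWA dynamics with the active-location matrix
    (step : (Fin 2 → ℝ) → ℝ → (Fin 2 → ℝ))
    (hstep : ∀ (xv : Fin 2 → ℝ) (uv : ℝ),
      step xv uv = (if heaviside (xv 1 - 3/2) = 1 then A1 else A2).mulVec xv + uv • Bv) :
    -- input u_k = 2 yields x_{k+1} = (0,2)ᵀ with location 1 active
    step 0 2 = ![0, 2] ∧ heaviside ((step 0 2) 1 - 3/2) = 1 ∧
    -- input u_k = 1 yields x_{k+1} = (0,1)ᵀ with location 2 active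
    step 0 1 = ![0, 1] ∧ heaviside ((step 0 1) 1 - 3/2) = 0 ∧
    -- both yield output y_{k+2} = 2, for any value of the next input
    (∀ u' : ℝ, Cv ⬝ᵥ step (step 0 2) u' = 2) ∧
    (∀ u' : ℝ, Cv ⬝ᵥ step (step 0 1) u' = 2) ∧
    -- hence the map u_k ↦ y_{k+2} is not injective
    (∀ u' : ℝ, ¬ Function.Injective fun uk : ℝ => Cv ⬝ᵥ step (step 0 uk) u') := by
  subst hA1 hA2 hB hC
  have h2 : step 0 2 = ![0, 2] := by
    rw [hstep]
    funext i
    fin_cases i <;> simp [heaviside, Matrix.mulVec, dotProduct]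
  have h1 : step 0 1 = ![0, 1] := by
    rw [hstep]
    funext i
    fin_cases i <;> simp [heaviside, Matrix.mulVec, dotProduct]
  have hh2 : heaviside ((step 0 2) 1 - 3/2) = 1 := by
    rw [h2]; simp [heaviside]; norm_num
  have hh1 : heaviside ((step 0 1) 1 - 3/2) = 0 := by
    rw [h1]; simp [heaviside]; norm_num
  have hy2 : ∀ u' : ℝ, (![1, 0] : Fin 2 → ℝ) ⬝ᵥ step (step 0 2) u' = 2 := by
    intro u'
    rw [h2, hstep]
    norm_num [heaviside, Matrix.mulVec, dotProduct, Fin.sum_univ_two]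
  have hy1 : ∀ u' : ℝ, (![1, 0] : Fin 2 → ℝ) ⬝ᵥ step (step 0 1) u' = 2 := by
    intro u'
    rw [h1, hstep]
    norm_num [heaviside, Matrix.mulVec, dotProduct, Fin.sum_univ_two]
  refine ⟨h2, hh2, h1, hh1, hy2, hy1, ?_⟩
  intro u' hinj
  have := hinj (a₁ := 2) (a₂ := 1) (by simp only; rw [hy2 u', hy1 u'])
  norm_num at this
end
end

section
/- (Unique explicit inverse of a relative-degree-1 PWA system.) Assume the output functions are location-independent with zero feedthrough (C_{q,k} = C_k, G_{q,k} = G_k, D_{q,k} = 0 for all q, k), and C_{k+1}·B_{q,k} ≠ 0 for all q, k. Then every trajectory (x_k, u_k, y_k) of the PWA system satisfies the explicit anticausal inverse-system equations x_{k+1} = Ā_k x_k + B̄_k y_{k+1} + F̄_k and u_k = C̄_k x_k + D̄_k y_{k+1} + Ḡ_k, where, with bold symbols denoting active-location quantities, D̄_k := (C_{k+1}·𝐁_k)^{-1}, C̄_k := −D̄_k·C_{k+1}·𝐀_k, Ḡ_k := −D̄_k·(C_{k+1}·𝐅_k + G_{k+1}), Ā_k := 𝐀_k + 𝐁_k·C̄_k,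 B̄_k := 𝐁_k·D̄_k, and F̄_k := 𝐅_k + 𝐁_k·Ḡ_k. -/
open Matrix

noncomputable section

/-- Unique explicit inverse of a relative-degree-1 PWA system: under
location-independent output functions with zero feedthrough and `C_{k+1} B_{q,k} ≠ 0`,
every trajectory satisfies the explicit anticausal inverse-system equations. -/
theorem pwa_relative_degree_one_explicit_inverse
    (n p L : ℕ)
    (A : Fin L → ℤ → Matrix (Fin n) (Fin n) ℝ)
    (B F : Fin L → ℤ → (Fin n → ℝ))
    -- location-independent output data with zero feedthrough
    (C : ℤ → (Fin n → ℝ)) (G : ℤ → ℝ)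
    (P : Matrix (Fin p) (Fin n) ℝ) (β : Fin p → ℝ)
    (Δstar : Fin L → Set (Fin p → ℝ))
    (hdisj : Pairwise fun q q' : Fin L => Disjoint (Δstar q) (Δstar q'))
    (δ : (Fin n → ℝ) → (Fin p → ℝ))
    (hδ : ∀ x, δ x = fun i => heaviside ((P.mulVec x) i - β i))
    (loc : (Fin n → ℝ) → Fin L)
    (hloc : ∀ x, δ x ∈ Δstar (loc x))
    -- all component models have relative degree 1
    (hCB : ∀ (q : Fin L) (k : ℤ), C (k+1) ⬝ᵥ B q k ≠ 0)
    -- a trajectory of the PWA system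
    (x : ℤ → (Fin n → ℝ)) (u y : ℤ → ℝ)
    (hx : ∀ k : ℤ, x (k+1) = (A (loc (x k)) k).mulVec (x k)
        + u k • B (loc (x k)) k + F (loc (x k)) k)
    (hy : ∀ k : ℤ, y k = C k ⬝ᵥ x k + G k)
    -- the inverse-system coefficients
    (Dbar : ℤ → ℝ) (hDbar : ∀ k, Dbar k = (C (k+1) ⬝ᵥ B (loc (x k)) k)⁻¹)
    (Cbar : ℤ → (Fin n → ℝ))
    (hCbar : ∀ k, Cbar k = -Dbar k • (C (k+1) ᵥ* A (loc (x k)) k))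
    (Gbar : ℤ → ℝ)
    (hGbar : ∀ k, Gbar k = -Dbar k * (C (k+1) ⬝ᵥ F (loc (x k)) k + G (k+1))) :
    -- Ā = 𝐀 + 𝐁 C̄,  B̄ = 𝐁 D̄,  F̄ = 𝐅 + 𝐁 Ḡ
    (∀ k : ℤ, x (k+1) =
        (A (loc (x k)) k + vecMulVec (B (loc (x k)) k) (Cbar k)).mulVec (x k)
        + (Dbar k * y (k+1)) • B (loc (x k)) k
        + (F (loc (x k)) k + Gbar k • B (loc (x k)) k)) ∧
    (∀ k : ℤ, u k = Cbar k ⬝ᵥ x k + Dbar k * y (k+1) + Gbar k) := by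
  have key : ∀ k : ℤ, u k = Cbar k ⬝ᵥ x k + Dbar k * y (k+1) + Gbar k := by
    intro k
    have hD : Dbar k * (C (k+1) ⬝ᵥ B (loc (x k)) k) = 1 := by
      rw [hDbar]; exact inv_mul_cancel₀ (hCB _ _)
    have hy1 : y (k+1) = C (k+1) ⬝ᵥ ((A (loc (x k)) k).mulVec (x k))
        + u k * (C (k+1) ⬝ᵥ B (loc (x k)) k)
        + C (k+1) ⬝ᵥ F (loc (x k)) k + G (k+1) := by
      rw [hy, hx]
      simp [dotProduct_add, dotProduct_smul, smul_eq_mul, mul_comm]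
    have hCx : Cbar k ⬝ᵥ x k = -(Dbar k * (C (k+1) ⬝ᵥ ((A (loc (x k)) k).mulVec (x k)))) := by
      rw [hCbar, smul_dotProduct, dotProduct_mulVec, smul_eq_mul]
      ring
    rw [hCx, hGbar, hy1]
    linear_combination (-(u k)) * hD
  refine ⟨?_, key⟩
  intro k
  have hmv : (A (loc (x k)) k + vecMulVec (B (loc (x k)) k) (Cbar k)).mulVec (x k)
      = (A (loc (x k)) k).mulVec (x k) + (Cbar k ⬝ᵥ x k) • B (loc (x k)) k := by
    rw [add_mulVec]
    congr 1
    funext i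
    simp [mulVec, vecMulVec_apply, dotProduct, Finset.sum_mul, smul_eq_mul, Finset.mul_sum]
    apply Finset.sum_congr rfl
    intro j _
    ring
  rw [hmv, hx k, key k]
  funext i
  simp [smul_eq_mul]
  ring
end
end

section
/- (Explicitness of switching under output-based switching.) Assume the output functions are location-independent with zero feedthrough (C_{q,k} = C_k, G_{q,k} = G_k, D_{q,k} = 0 for all q, k); assume output-based switching: there exist P_o ∈ ℝ^{p×1} and β_o ∈ ℝ^p with P = P_o·C_k and β = β_o − P_o·G_k for every k; and assume C_{k+1}·B_{q,k} = 0 for all q, k. Then along any trajectory, the switching signature at time k+1 satisfies δ(x_{k+1}) = H( P_o·C_{k+1}·(𝐀_k x_k + 𝐅_k) − β_o + P_o·G_{k+1} ); in particular δ(x_{k+1}), and hence the active location at time k+1, does not depend on the input u_k. -/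
open Matrix

noncomputable section

/-- Explicitness of switching under output-based switching: with location-independent
output functions, zero feedthrough, output-based switching data, and
`C_{k+1} B_{q,k} = 0`, the switching signature at time `k+1` is a function of `x_k`
alone (in particular it does not depend on the input `u_k`). -/
theorem pwa_output_based_switching_explicit
    (n p L : ℕ)
    (A : Fin L → ℤ → Matrix (Fin n) (Fin n) ℝ)
    (B F : Fin L → ℤ → (Fin n → ℝ))
    -- location-independent output data with zero feedthrough
    (C : ℤ → (Fin n → ℝ)) (G : ℤ → ℝ)
    (P : Matrix (Fin p) (Fin n) ℝ) (β : Fin p → ℝ)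
    (Δstar : Fin L → Set (Fin p → ℝ))
    (hdisj : Pairwise fun q q' : Fin L => Disjoint (Δstar q) (Δstar q'))
    (δ : (Fin n → ℝ) → (Fin p → ℝ))
    (hδ : ∀ x, δ x = fun i => heaviside ((P.mulVec x) i - β i))
    (loc : (Fin n → ℝ) → Fin L)
    (hloc : ∀ x, δ x ∈ Δstar (loc x))
    -- output-based switching: P = P_o C_k and β = β_o − P_o G_k for every k
    (Po : Fin p → ℝ) (βo : Fin p → ℝ)
    (hPo : ∀ k : ℤ, P = Matrix.of fun i j => Po i * C k j)
    (hβo : ∀ k : ℤ, β = fun i => βo i - Po i * G k)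
    -- C_{k+1} B_{q,k} = 0 for all q, k
    (hCB : ∀ (q : Fin L) (k : ℤ), C (k+1) ⬝ᵥ B q k = 0)
    -- a trajectory of the PWA system
    (x : ℤ → (Fin n → ℝ)) (u y : ℤ → ℝ)
    (hx : ∀ k : ℤ, x (k+1) = (A (loc (x k)) k).mulVec (x k)
        + u k • B (loc (x k)) k + F (loc (x k)) k)
    (hy : ∀ k : ℤ, y k = C k ⬝ᵥ x k + G k) :
    ∀ k : ℤ, δ (x (k+1)) = fun i => heaviside
      (Po i * (C (k+1) ⬝ᵥ ((A (loc (x k)) k).mulVec (x k) + F (loc (x k)) k))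
        - βo i + Po i * G (k+1)) := by
  intro k
  funext i
  simp only [hδ, hPo (k+1), hβo (k+1)]
  have hPm : (Matrix.of fun i j => Po i * C (k+1) j).mulVec (x (k+1)) i
      = Po i * (C (k+1) ⬝ᵥ x (k+1)) := by
    simp [Matrix.mulVec, dotProduct, Finset.mul_sum, mul_assoc]
  rw [hPm, hx k]
  have hdot : C (k+1) ⬝ᵥ ((A (loc (x k)) k).mulVec (x k)
      + u k • B (loc (x k)) k + F (loc (x k)) k)
      = C (k+1) ⬝ᵥ ((A (loc (x k)) k).mulVec (x k) + F (loc (x k)) k) := by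
    simp [dotProduct_add, dotProduct_smul, hCB (loc (x k)) k]
  rw [hdot]
  ring_nf
end
end

section
/- (Unique explicit inverse of a relative-degree-2 PWA system.) Assume the output functions are location-independent with zero feedthrough (C_{q,k} = C_k, G_{q,k} = G_k, D_{q,k} = 0 for all q, k); assume output-based switching: there exist P_o ∈ ℝ^{p×1} and β_o ∈ ℝ^p with P = P_o·C_k and β = β_o − P_o·G_k for every k; assume C_{k+1}·B_{q,k} = 0 for all q, k; and assume that along a given trajectory 𝒟_k := C_{k+2}·𝐀_{k+1}·𝐁_k ≠ 0 for all k. Then the trajectory satisfies the explicit anticausal inverse-system equations x_{k+1} = (𝐀_k + 𝐁_k C̄_k) x_k + 𝐁_k D̄_k y_{k+2} + 𝐅_k + 𝐁_k Ḡ_k and u_k = C̄_k x_k + D̄_k y_{k+2} + Ḡ_k, where D̄_k := 𝒟_k^{-1}, C̄_k := −D̄_k·C_{k+2}·𝐀_{k+1}·𝐀_k, and Ḡ_k := −D̄_k·( C_{k+2}·𝐀_{k+1}·𝐅_k + C_{k+2}·𝐅_{k+1} + G_{k+2} ); moreover the active location at time k+1 appearing in 𝐀_{k+1}, 𝐅_{k+1}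 is determined from x_k alone via δ(x_{k+1}) = H( P_o·C_{k+1}·(𝐀_k x_k + 𝐅_k) − β_o + P_o·G_{k+1} ), so these equations constitute an explicit PWA system with y as input and u as output. -/
open Matrix

noncomputable section

/-- Unique explicit inverse of a relative-degree-2 PWA system: under location-independent
output functions with zero feedthrough, output-based switching, `C_{k+1} B_{q,k} = 0`,
and `𝒟_k = C_{k+2} 𝐀_{k+1} 𝐁_k ≠ 0` along the trajectory, the trajectory satisfies the
explicit anticausal inverse-system equations, and the switching signature at `k+1` is
determined from `x_k` alone. -/
theorem pwa_relative_degree_two_explicit_inverse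
    (n p L : ℕ)
    (A : Fin L → ℤ → Matrix (Fin n) (Fin n) ℝ)
    (B F : Fin L → ℤ → (Fin n → ℝ))
    -- location-independent output data with zero feedthrough
    (C : ℤ → (Fin n → ℝ)) (G : ℤ → ℝ)
    (P : Matrix (Fin p) (Fin n) ℝ) (β : Fin p → ℝ)
    (Δstar : Fin L → Set (Fin p → ℝ))
    (hdisj : Pairwise fun q q' : Fin L => Disjoint (Δstar q) (Δstar q'))
    (δ : (Fin n → ℝ) → (Fin p → ℝ))
    (hδ : ∀ x, δ x = fun i => heaviside ((P.mulVec x) i - β i))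
    (loc : (Fin n → ℝ) → Fin L)
    (hloc : ∀ x, δ x ∈ Δstar (loc x))
    -- output-based switching: P = P_o C_k and β = β_o − P_o G_k for every k
    (Po : Fin p → ℝ) (βo : Fin p → ℝ)
    (hPo : ∀ k : ℤ, P = Matrix.of fun i j => Po i * C k j)
    (hβo : ∀ k : ℤ, β = fun i => βo i - Po i * G k)
    -- C_{k+1} B_{q,k} = 0 for all q, k
    (hCB : ∀ (q : Fin L) (k : ℤ), C (k+1) ⬝ᵥ B q k = 0)
    -- a trajectory of the PWA system
    (x : ℤ → (Fin n → ℝ)) (u y : ℤ → ℝ)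
    (hx : ∀ k : ℤ, x (k+1) = (A (loc (x k)) k).mulVec (x k)
        + u k • B (loc (x k)) k + F (loc (x k)) k)
    (hy : ∀ k : ℤ, y k = C k ⬝ᵥ x k + G k)
    -- 𝒟_k = C_{k+2} 𝐀_{k+1} 𝐁_k ≠ 0 along the trajectory
    (𝒟 : ℤ → ℝ)
    (h𝒟 : ∀ k, 𝒟 k = C (k+2) ⬝ᵥ (A (loc (x (k+1))) (k+1)).mulVec (B (loc (x k)) k))
    (h𝒟ne : ∀ k : ℤ, 𝒟 k ≠ 0)
    -- the inverse-system coefficients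
    (Dbar : ℤ → ℝ) (hDbar : ∀ k, Dbar k = (𝒟 k)⁻¹)
    (Cbar : ℤ → (Fin n → ℝ))
    (hCbar : ∀ k, Cbar k =
      -Dbar k • ((C (k+2) ᵥ* A (loc (x (k+1))) (k+1)) ᵥ* A (loc (x k)) k))
    (Gbar : ℤ → ℝ)
    (hGbar : ∀ k, Gbar k = -Dbar k *
      (C (k+2) ⬝ᵥ (A (loc (x (k+1))) (k+1)).mulVec (F (loc (x k)) k)
        + C (k+2) ⬝ᵥ F (loc (x (k+1))) (k+1) + G (k+2))) :
    -- the explicit anticausal inverse-system equations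
    (∀ k : ℤ, x (k+1) =
        (A (loc (x k)) k + vecMulVec (B (loc (x k)) k) (Cbar k)).mulVec (x k)
        + (Dbar k * y (k+2)) • B (loc (x k)) k
        + (F (loc (x k)) k + Gbar k • B (loc (x k)) k)) ∧
    (∀ k : ℤ, u k = Cbar k ⬝ᵥ x k + Dbar k * y (k+2) + Gbar k) ∧
    -- the active location at time k+1 is determined from x_k alone
    (∀ k : ℤ, δ (x (k+1)) = fun i => heaviside
      (Po i * (C (k+1) ⬝ᵥ ((A (loc (x k)) k).mulVec (x k) + F (loc (x k)) k))
        - βo i + Po i * G (k+1))) := by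
  have hvmv : ∀ (b c v : Fin n → ℝ), (vecMulVec b c).mulVec v = (c ⬝ᵥ v) • b := by
    intro b c v
    funext i
    simp only [mulVec, vecMulVec_apply, dotProduct, Pi.smul_apply, smul_eq_mul,
      Finset.sum_mul, Finset.mul_sum]
    exact Finset.sum_congr rfl fun j _ => by ring
  have key : ∀ k : ℤ, y (k+2) =
      C (k+2) ⬝ᵥ (A (loc (x (k+1))) (k+1)).mulVec ((A (loc (x k)) k).mulVec (x k))
      + u k * 𝒟 k
      + C (k+2) ⬝ᵥ (A (loc (x (k+1))) (k+1)).mulVec (F (loc (x k)) k)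
      + C (k+2) ⬝ᵥ F (loc (x (k+1))) (k+1) + G (k+2) := by
    intro k
    have e1 := hx k
    have e2 := hx (k+1)
    rw [show k+1+1 = k+2 by ring] at e2
    have hcb := hCB (loc (x (k+1))) (k+1)
    rw [show k+1+1 = k+2 by ring] at hcb
    set q1 := loc (x (k+1)) with hq1
    rw [hy (k+2), e2, e1]
    simp only [mulVec_add, mulVec_smul, dotProduct_add, dotProduct_smul, smul_eq_mul,
      hcb, mul_zero, h𝒟]
    ring
  have hu : ∀ k : ℤ, u k = Cbar k ⬝ᵥ x k + Dbar k * y (k+2) + Gbar k := by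
    intro k
    have hk := key k
    have hD := h𝒟ne k
    rw [hCbar, hGbar, hDbar, hk]
    rw [smul_dotProduct]
    rw [← Matrix.dotProduct_mulVec, ← Matrix.dotProduct_mulVec]
    field_simp
    rw [smul_eq_mul]
    field_simp
    ring
  refine ⟨?_, hu, ?_⟩
  · intro k
    have e1 := hx k
    rw [e1, hu k, add_mulVec, hvmv]
    module
  · intro k
    have e1 := hx k
    rw [hδ, hPo (k+1), hβo (k+1)]
    funext i
    have hcx : C (k+1) ⬝ᵥ x (k+1)
        = C (k+1) ⬝ᵥ ((A (loc (x k)) k).mulVec (x k) + F (loc (x k)) k) := by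
      rw [e1]
      simp only [dotProduct_add, dotProduct_smul, smul_eq_mul, hCB, mul_zero]
      ring
    have hmv : ((Matrix.of fun i j => Po i * C (k+1) j).mulVec (x (k+1))) i
        = Po i * (C (k+1) ⬝ᵥ x (k+1)) := by
      simp only [mulVec, Matrix.of_apply, dotProduct, Finset.mul_sum]
      exact Finset.sum_congr rfl fun j _ => by ring
    rw [hmv, hcx]
    ring_nf
end
end

section
/- (PWA stable inversion with stable-mode-dependent switching.) Assume switching depends only on the stable modes: P·V^{-1} = [P̃^s, 0] for some P̃^s ∈ ℝ^{p×n_s}. Let z^s : ℤ → ℝ^{n_s} and z^u : ℤ → ℝ^{n_u} be sequences, define δ_k := H(P̃^s·z^s_k − β) and let q_k be the location with δ_k ∈ Δ*_{q_k}, and suppose for every k: z^s_{k+1} = Ã^s_{q_k,k}·z^s_k + B̃^s_{q_k,k}·y_{k+μ̄} + F̃^s_{q_k,k} (forward-in-time evolution of the stable modes) and z^u_k = (Ã^u_{q_k,k})^{-1}·( z^u_{k+1} − B̃^u_{q_k,k}·y_{k+μ̄} − F̃^u_{q_k,k} ) (backward-in-time evolution of the unstable modes). Then the sequence x_k := V^{-1}·(z^s_k,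 z^u_k) satisfies, for every k: H(P·x_k − β) = δ_k, so q_k is indeed the active location at x_k, and x_{k+1} = Ā_{q_k,k}·x_k + B̄_{q_k,k}·y_{k+μ̄} + F̄_{q_k,k}; that is, x is an exact trajectory of the inverse PWA system driven by the reference y. -/
open Matrix

noncomputable section

/-- PWA stable inversion with stable-mode-dependent switching: evolving the stable modes
forwards in time (which determines the switching sequence) and the unstable modes
backwards in time yields an exact trajectory of the inverse PWA system driven by the
reference. -/
theorem pwa_stable_inversion_stable_mode_switching
    (ns nu p L : ℕ)
    (Abar : Fin L → ℤ → Matrix (Fin ns ⊕ Fin nu) (Fin ns ⊕ Fin nu) ℝ)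
    (Bbar Fbar : Fin L → ℤ → (Fin ns ⊕ Fin nu → ℝ))
    (P : Matrix (Fin p) (Fin ns ⊕ Fin nu) ℝ) (β : Fin p → ℝ)
    (Δstar : Fin L → Set (Fin p → ℝ))
    (hdisj : Pairwise fun q q' : Fin L => Disjoint (Δstar q) (Δstar q'))
    -- the decoupling similarity transform
    (V : Matrix (Fin ns ⊕ Fin nu) (Fin ns ⊕ Fin nu) ℝ) (hV : IsUnit V.det)
    (As : Fin L → ℤ → Matrix (Fin ns) (Fin ns) ℝ)
    (Au : Fin L → ℤ → Matrix (Fin nu) (Fin nu) ℝ)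
    (hAu : ∀ (q : Fin L) (k : ℤ), IsUnit (Au q k).det)
    (hdecouple : ∀ (q : Fin L) (k : ℤ),
      V * Abar q k * V⁻¹ = Matrix.fromBlocks (As q k) 0 0 (Au q k))
    -- switching depends only on the stable modes: P V⁻¹ = [P̃ˢ, 0]
    (Ps : Matrix (Fin p) (Fin ns) ℝ)
    (hPs : P * V⁻¹ = Matrix.fromCols Ps 0)
    -- the reference and the output preview
    (y : ℤ → ℝ) (μp : ℕ)
    -- the stable/unstable mode sequences and the switching sequence
    (zs : ℤ → (Fin ns → ℝ)) (zu : ℤ → (Fin nu → ℝ))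
    (δk : ℤ → (Fin p → ℝ))
    (hδk : ∀ k : ℤ, δk k = fun i => heaviside ((Ps.mulVec (zs k)) i - β i))
    (q : ℤ → Fin L)
    (hq : ∀ k : ℤ, δk k ∈ Δstar (q k))
    -- forward-in-time evolution of the stable modes
    (hforward : ∀ k : ℤ, zs (k+1) = (As (q k) k).mulVec (zs k)
        + y (k + (μp : ℤ)) • (fun i => V.mulVec (Bbar (q k) k) (Sum.inl i))
        + (fun i => V.mulVec (Fbar (q k) k) (Sum.inl i)))
    -- backward-in-time evolution of the unstable modes
    (hbackward : ∀ k : ℤ, zu k = (Au (q k) k)⁻¹.mulVec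
        (zu (k+1) - y (k + (μp : ℤ)) • (fun i => V.mulVec (Bbar (q k) k) (Sum.inr i))
          - fun i => V.mulVec (Fbar (q k) k) (Sum.inr i)))
    -- the reconstructed state
    (x : ℤ → (Fin ns ⊕ Fin nu → ℝ))
    (hx : ∀ k : ℤ, x k = V⁻¹.mulVec (Sum.elim (zs k) (zu k))) :
    -- the switching signature of x matches δ_k, so q k is the active location at x k
    (∀ k : ℤ, (fun i => heaviside ((P.mulVec (x k)) i - β i)) = δk k) ∧
    (∀ k : ℤ, (fun i => heaviside ((P.mulVec (x k)) i - β i)) ∈ Δstar (q k)) ∧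
    -- x is an exact trajectory of the inverse PWA system driven by y
    (∀ k : ℤ, x (k+1) = (Abar (q k) k).mulVec (x k)
        + y (k + (μp : ℤ)) • Bbar (q k) k + Fbar (q k) k) := by
  have hVx : ∀ k : ℤ, V.mulVec (x k) = Sum.elim (zs k) (zu k) := by
    intro k
    rw [hx, Matrix.mulVec_mulVec, Matrix.mul_nonsing_inv _ hV, Matrix.one_mulVec]
  have hPx : ∀ k : ℤ, P.mulVec (x k) = Ps.mulVec (zs k) := by
    intro k
    have : P.mulVec (x k) = (P * V⁻¹).mulVec (Sum.elim (zs k) (zu k)) := by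
      rw [hx, Matrix.mulVec_mulVec]
    rw [this, hPs, Matrix.fromCols_mulVec_sumElim, Matrix.zero_mulVec, add_zero]
  have h1 : ∀ k : ℤ, (fun i => heaviside ((P.mulVec (x k)) i - β i)) = δk k := by
    intro k
    rw [hPx, hδk]
  refine ⟨h1, fun k => (h1 k) ▸ hq k, ?_⟩
  intro k
  -- unstable forward relation
  have hzu : ∀ k : ℤ, zu (k+1) = (Au (q k) k).mulVec (zu k)
      + y (k + (μp : ℤ)) • (fun i => V.mulVec (Bbar (q k) k) (Sum.inr i))
      + (fun i => V.mulVec (Fbar (q k) k) (Sum.inr i)) := by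
    intro k
    have := congrArg (fun v => (Au (q k) k).mulVec v) (hbackward k)
    simp only [Matrix.mulVec_mulVec, Matrix.mul_nonsing_inv _ (hAu (q k) k),
      Matrix.one_mulVec] at this
    rw [this]
    abel
  have key : V.mulVec ((Abar (q k) k).mulVec (x k)
      + y (k + (μp : ℤ)) • Bbar (q k) k + Fbar (q k) k)
      = Sum.elim (zs (k+1)) (zu (k+1)) := by
    have hA : V.mulVec ((Abar (q k) k).mulVec (x k))
        = (Matrix.fromBlocks (As (q k) k) 0 0 (Au (q k) k)).mulVec
            (Sum.elim (zs k) (zu k)) := by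
      rw [hx, Matrix.mulVec_mulVec, Matrix.mulVec_mulVec, ← hdecouple (q k) k,
        Matrix.mul_assoc]
    rw [Matrix.mulVec_add, Matrix.mulVec_add, Matrix.mulVec_smul, hA,
      Matrix.fromBlocks_mulVec]
    funext i
    cases i with
    | inl i =>
      have := congrFun (hforward k) i
      simp only [Sum.elim_inl, Sum.elim_comp_inl, Sum.elim_comp_inr,
        Matrix.zero_mulVec, add_zero, Pi.add_apply, Pi.smul_apply,
        smul_eq_mul] at this ⊢
      rw [this]
    | inr i =>
      have := congrFun (hzu k) i
      simp only [Sum.elim_inr, Sum.elim_comp_inl, Sum.elim_comp_inr,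
        Matrix.zero_mulVec, zero_add, Pi.add_apply, Pi.smul_apply,
        smul_eq_mul] at this ⊢
      rw [this]
  have := congrArg (fun v => V⁻¹.mulVec v) key
  simp only [Matrix.mulVec_mulVec, Matrix.nonsing_inv_mul _ hV,
    Matrix.one_mulVec] at this
  rw [hx (k+1), ← this]
end
end

section
/- (PWA stable inversion with unstable-mode-dependent switching.) Assume switching depends only on the unstable modes: P·V^{-1} = [0, P̃^u] for some P̃^u ∈ ℝ^{p×n_u}. Let z^s : ℤ → ℝ^{n_s} and z^u : ℤ → ℝ^{n_u} be sequences, define δ_k := H(P̃^u·z^u_k − β) and let q_k be the location with δ_k ∈ Δ*_{q_k}, and suppose for every k: z^u_k satisfies the (implicit) backward-in-time relation z^u_k = (Ã^u_{q_k,k})^{-1}·( z^u_{k+1} − B̃^u_{q_k,k}·y_{k+μ̄} − F̃^u_{q_k,k} ), and z^s satisfies the forward-in-time recursion z^s_{k+1} = Ã^s_{q_k,k}·z^s_k + B̃^s_{q_k,k}·y_{k+μ̄} + F̃^s_{q_k,k}. Then the sequence x_k := V^{-1}·(z^s_k, z^u_k) satisfies, for every k: H(P·x_k − β) = δ_k,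 so q_k is the active location at x_k, and x_{k+1} = Ā_{q_k,k}·x_k + B̄_{q_k,k}·y_{k+μ̄} + F̄_{q_k,k}; that is, x is an exact trajectory of the inverse PWA system driven by the reference y. -/
open Matrix

noncomputable section

/-- PWA stable inversion with unstable-mode-dependent switching: solving the implicit
backward-in-time relation for the unstable modes (which determines the switching
sequence) and evolving the stable modes forwards in time yields an exact trajectory of
the inverse PWA system driven by the reference. -/
theorem pwa_stable_inversion_unstable_mode_switching
    (ns nu p L : ℕ)
    (Abar : Fin L → ℤ → Matrix (Fin ns ⊕ Fin nu) (Fin ns ⊕ Fin nu) ℝ)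
    (Bbar Fbar : Fin L → ℤ → (Fin ns ⊕ Fin nu → ℝ))
    (P : Matrix (Fin p) (Fin ns ⊕ Fin nu) ℝ) (β : Fin p → ℝ)
    (Δstar : Fin L → Set (Fin p → ℝ))
    (hdisj : Pairwise fun q q' : Fin L => Disjoint (Δstar q) (Δstar q'))
    -- the decoupling similarity transform
    (V : Matrix (Fin ns ⊕ Fin nu) (Fin ns ⊕ Fin nu) ℝ) (hV : IsUnit V.det)
    (As : Fin L → ℤ → Matrix (Fin ns) (Fin ns) ℝ)
    (Au : Fin L → ℤ → Matrix (Fin nu) (Fin nu) ℝ)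
    (hAu : ∀ (q : Fin L) (k : ℤ), IsUnit (Au q k).det)
    (hdecouple : ∀ (q : Fin L) (k : ℤ),
      V * Abar q k * V⁻¹ = Matrix.fromBlocks (As q k) 0 0 (Au q k))
    -- switching depends only on the unstable modes: P V⁻¹ = [0, P̃ᵘ]
    (Pu : Matrix (Fin p) (Fin nu) ℝ)
    (hPu : P * V⁻¹ = Matrix.fromCols 0 Pu)
    -- the reference and the output preview
    (y : ℤ → ℝ) (μp : ℕ)
    -- the stable/unstable mode sequences and the switching sequence
    (zs : ℤ → (Fin ns → ℝ)) (zu : ℤ → (Fin nu → ℝ))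
    (δk : ℤ → (Fin p → ℝ))
    (hδk : ∀ k : ℤ, δk k = fun i => heaviside ((Pu.mulVec (zu k)) i - β i))
    (q : ℤ → Fin L)
    (hq : ∀ k : ℤ, δk k ∈ Δstar (q k))
    -- the implicit backward-in-time relation for the unstable modes
    (hbackward : ∀ k : ℤ, zu k = (Au (q k) k)⁻¹.mulVec
        (zu (k+1) - y (k + (μp : ℤ)) • (fun i => V.mulVec (Bbar (q k) k) (Sum.inr i))
          - fun i => V.mulVec (Fbar (q k) k) (Sum.inr i)))
    -- the forward-in-time recursion for the stable modes
    (hforward : ∀ k : ℤ, zs (k+1) = (As (q k) k).mulVec (zs k)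
        + y (k + (μp : ℤ)) • (fun i => V.mulVec (Bbar (q k) k) (Sum.inl i))
        + (fun i => V.mulVec (Fbar (q k) k) (Sum.inl i)))
    -- the reconstructed state
    (x : ℤ → (Fin ns ⊕ Fin nu → ℝ))
    (hx : ∀ k : ℤ, x k = V⁻¹.mulVec (Sum.elim (zs k) (zu k))) :
    -- the switching signature of x matches δ_k, so q k is the active location at x k
    (∀ k : ℤ, (fun i => heaviside ((P.mulVec (x k)) i - β i)) = δk k) ∧
    (∀ k : ℤ, (fun i => heaviside ((P.mulVec (x k)) i - β i)) ∈ Δstar (q k)) ∧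
    -- x is an exact trajectory of the inverse PWA system driven by y
    (∀ k : ℤ, x (k+1) = (Abar (q k) k).mulVec (x k)
        + y (k + (μp : ℤ)) • Bbar (q k) k + Fbar (q k) k) := by
  have hVV : V⁻¹ * V = 1 := Matrix.nonsing_inv_mul V hV
  have hPx : ∀ k : ℤ, P.mulVec (x k) = Pu.mulVec (zu k) := by
    intro k
    rw [hx k, Matrix.mulVec_mulVec, hPu, Matrix.fromCols_mulVec_sumElim]
    simp
  have h1 : ∀ k : ℤ, (fun i => heaviside ((P.mulVec (x k)) i - β i)) = δk k := by
    intro k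
    rw [hδk k, hPx k]
  refine ⟨h1, fun k => (h1 k) ▸ hq k, ?_⟩
  intro k
  -- unstable forward recursion derived from the backward one
  have hzu : zu (k+1) = (Au (q k) k).mulVec (zu k)
      + y (k + (μp : ℤ)) • (fun i => V.mulVec (Bbar (q k) k) (Sum.inr i))
      + (fun i => V.mulVec (Fbar (q k) k) (Sum.inr i)) := by
    have h := congrArg (fun v => (Au (q k) k).mulVec v) (hbackward k)
    simp only [Matrix.mulVec_mulVec, Matrix.mul_nonsing_inv _ (hAu (q k) k),
      Matrix.one_mulVec] at h
    rw [h]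
    abel
  have key : Sum.elim (zs (k+1)) (zu (k+1))
      = (Matrix.fromBlocks (As (q k) k) 0 0 (Au (q k) k)).mulVec (Sum.elim (zs k) (zu k))
        + y (k + (μp : ℤ)) • V.mulVec (Bbar (q k) k) + V.mulVec (Fbar (q k) k) := by
    rw [Matrix.fromBlocks_mulVec]
    funext i
    cases i with
    | inl i =>
      have := congrFun (hforward k) i
      simpa using this
    | inr i =>
      have := congrFun hzu i
      simpa using this
  have hVB : V⁻¹.mulVec (V.mulVec (Bbar (q k) k)) = Bbar (q k) k := by
    rw [Matrix.mulVec_mulVec, hVV, Matrix.one_mulVec]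
  have hVF : V⁻¹.mulVec (V.mulVec (Fbar (q k) k)) = Fbar (q k) k := by
    rw [Matrix.mulVec_mulVec, hVV, Matrix.one_mulVec]
  rw [hx (k+1), key, ← hdecouple (q k) k]
  rw [Matrix.mulVec_add, Matrix.mulVec_add, Matrix.mulVec_smul, hVB, hVF]
  congr 2
  rw [hx k, Matrix.mulVec_mulVec, Matrix.mulVec_mulVec, ← Matrix.mul_assoc, ← Matrix.mul_assoc, hVV,
    Matrix.one_mul]
end
end
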